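/- arXiv:1804.07424 — 3 statements merged into one kernel-verified Lean document; each statement's English description precedes it below -/
import Mathlib

section
/- Let W = ⊕_{n∈ℂ} W_{[n]} be a ℂ-graded complex vector space with graded dual W' = ⊕_{n∈ℂ} W_{[n]}* and algebraic completion \overline{W} = ∏_{n∈ℂ} W_{[n]}, and let f : F_nℂ → (W')* be a map satisfying: (i) for every w' ∈ W', (z_1,…,z_n) ↦ ⟨w', f(z_1,…,z_n)⟩ is a rational function with the only possible poles at z_i = z_j (i ≠ j); (ii) there exist integers p_{ij} (1 ≤ i < j ≤ n) and a formal series g ∈ W[[x_1,…,x_n]] such that ∏_{i<j}(z_i−z_j)^{p_{ij}}⟨w', f(z_1,…,z_n)⟩ = ⟨w', g(z_1,…,z_n)⟩ as polynomial functions, for every w' ∈ W' and every (z_1,…,z_n) ∈ F_nℂ. If in addition there exists a complex number C such that every coefficient b_{i_1…i_n} of x_1^{i_1}⋯x_n^{i_n} in g is a homogeneous element of W with wt b_{i_1…i_n} − i_1 − ⋯ − i_n = C, then f takes values in \overline{W} (viewed inside (W')*). -/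
set_option autoImplicit false
set_option maxHeartbeats 1000000

open scoped BigOperators

noncomputable section

namespace VA

/-- Absolute convergence of a series of complex numbers indexed by `ι` to the sum `s`. -/
def AbsConvTo {ι : Type*} (f : ι → ℂ) (s : ℂ) : Prop :=
  Summable (fun i => ‖f i‖) ∧ HasSum f s

/-- The configuration-space condition: the entries of `z` are pairwise distinct. -/
def Conf {ι : Type*} (z : ι → ℂ) : Prop := ∀ i j : ι, i ≠ j → z i ≠ z j

/-- `‖z 0‖ > ‖z 1‖ > ⋯ > ‖z (n-1)‖`. -/
def Ordered {n : ℕ} (z : Fin n → ℂ) : Prop := ∀ i j : Fin n, i < j → ‖z j‖ < ‖z i‖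

/-- `‖z 0‖ > ‖z 1‖ > ⋯ > ‖z (n-1)‖ > 0`. -/
def OrderedPos {n : ℕ} (z : Fin n → ℂ) : Prop := Ordered z ∧ ∀ i, 0 < ‖z i‖

/-- A rational function in the variables `z i`, `i : ι`, whose only possible poles are
at `z i = 0` and on the diagonals `z i = z j` (`i ≠ j`); it is recorded as a numerator
polynomial together with the orders of the poles. -/
structure RatFn (ι : Type*) [Fintype ι] [DecidableEq ι] where
  num : MvPolynomial ι ℂ
  a : ι → ℕ
  b : ι → ι → ℕ

def RatFn.eval {ι : Type*} [Fintype ι] [DecidableEq ι] (R : RatFn ι) (z : ι → ℂ) : ℂ :=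
  MvPolynomial.eval z R.num /
    ((∏ i, z i ^ R.a i) * ∏ q ∈ Finset.univ.offDiag, (z q.1 - z q.2) ^ R.b q.1 q.2)

/-- A rational function in the variables `z i`, `i : ι`, whose only possible poles are
on the diagonals `z i = z j` (`i ≠ j`). -/
structure DiagRatFn (ι : Type*) [Fintype ι] [DecidableEq ι] where
  num : MvPolynomial ι ℂ
  b : ι → ι → ℕ

def DiagRatFn.eval {ι : Type*} [Fintype ι] [DecidableEq ι] (R : DiagRatFn ι) (z : ι → ℂ) : ℂ :=
  MvPolynomial.eval z R.num / ∏ q ∈ Finset.univ.offDiag, (z q.1 - z q.2) ^ R.b q.1 q.2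

/-- A linear functional belongs to the graded dual iff its restriction to all but
finitely many homogeneous components vanishes. -/
def InGradedDual {ι : Type*} {M : Type*} [AddCommGroup M] [Module ℂ M]
    (proj : ι → M →ₗ[ℂ] M) (φ : M →ₗ[ℂ] ℂ) : Prop :=
  (Function.support fun i => φ ∘ₗ proj i).Finite

/-- Iterated application: `compApply n f w = f 0 (f 1 (⋯ (f (n-1) w)))`. -/
def compApply {M : Type*} : (n : ℕ) → (Fin n → (M → M)) → M → M
  | 0, _, w => w
  | n+1, f, w => f 0 (compApply n (fun i => f i.succ) w)

section Graded

variable (W : Type*) [AddCommGroup W] [Module ℂ W]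

/-- A `ℂ`-grading of `W`, recorded via the projections onto the homogeneous
subspaces, whose weights have lower-bounded real parts. -/
structure CGrading where
  proj : ℂ → W →ₗ[ℂ] W
  proj_comp : ∀ m n : ℂ, proj m ∘ₗ proj n = if m = n then proj n else 0
  proj_finite : ∀ w : W, (Function.support fun n => proj n w).Finite
  proj_sum : ∀ w : W, (∑ᶠ n : ℂ, proj n w) = w
  lower_bound : ∃ B : ℝ, ∀ n : ℂ, n.re < B → proj n = 0

/-- A `ℤ`-grading of `V` with lower-bounded weights. -/
structure ZGrading where
  proj : ℤ → W →ₗ[ℂ] W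
  proj_comp : ∀ m n : ℤ, proj m ∘ₗ proj n = if m = n then proj n else 0
  proj_finite : ∀ w : W, (Function.support fun n => proj n w).Finite
  proj_sum : ∀ w : W, (∑ᶠ n : ℤ, proj n w) = w
  lower_bound : ∃ B : ℤ, ∀ n : ℤ, n < B → proj n = 0

variable {W}

/-- The grading operator `d` of a `ℂ`-graded space. -/
def CGrading.d (G : CGrading W) (w : W) : W := ∑ᶠ n : ℂ, n • G.proj n w

/-- The grading operator `d` of a `ℤ`-graded space. -/
def ZGrading.d (G : ZGrading W) (v : W) : W := ∑ᶠ n : ℤ, (n : ℂ) • G.proj n v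

/-- The operator `z^d` on a `ℤ`-graded space. -/
def ZGrading.zd (G : ZGrading W) (z : ℂ) (v : W) : W := ∑ᶠ n : ℤ, (z ^ n) • G.proj n v

/-- The algebraic completion `∏ₙ W_[n]`, realized as the submodule of functions
`ℂ → W` recording a homogeneous component in each weight. -/
def CGrading.compSub (G : CGrading W) : Submodule ℂ (ℂ → W) where
  carrier := {f | ∀ n, G.proj n (f n) = f n}
  add_mem' := by
    intro a b ha hb n
    simp only [Pi.add_apply, map_add, ha n, hb n]
  zero_mem' := by
    intro n
    simp
  smul_mem' := by
    intro c f hf n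
    simp only [Pi.smul_apply, map_smul, hf n]

/-- The algebraic completion of a graded space. -/
abbrev CGrading.Comp (G : CGrading W) : Type _ := ↥G.compSub

/-- The pairing between the graded dual and the algebraic completion. -/
def CGrading.pair (G : CGrading W) (φ : W →ₗ[ℂ] ℂ) (f : G.Comp) : ℂ :=
  ∑ᶠ n : ℂ, φ (f.1 n)

/-- The embedding of `W` into its algebraic completion. -/
def CGrading.emb (G : CGrading W) (w : W) : G.Comp :=
  ⟨fun n => G.proj n w, by
    intro n
    have h := congrArg (fun T : W →ₗ[ℂ] W => T w) (G.proj_comp n n)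
    simpa using h⟩

/-- The componentwise extension of an operator on `W` to the algebraic completion. -/
def CGrading.ext (G : CGrading W) (L : W → W) (f : G.Comp) : G.Comp :=
  ⟨fun m => ∑ᶠ n : ℂ, G.proj m (L (f.1 n)), by
    intro m
    show G.proj m (∑ᶠ n : ℂ, G.proj m (L (f.1 n))) = ∑ᶠ n : ℂ, G.proj m (L (f.1 n))
    by_cases h : (Function.support fun n => G.proj m (L (f.1 n))).Finite
    · have h1 := AddMonoidHom.map_finsum (G.proj m).toAddMonoidHom h
      simp only [LinearMap.toAddMonoidHom_coe] at h1
      rw [h1]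
      refine finsum_congr fun n => ?_
      have h2 := congrArg (fun T : W →ₗ[ℂ] W => T (L (f.1 n))) (G.proj_comp m m)
      simpa using h2
    · rw [finsum_of_infinite_support h]
      simp⟩

/-- The operator `z^d` on the algebraic completion, acting on the component of
weight `n` by `z ^ n` (complex power). -/
def CGrading.zd (G : CGrading W) (z : ℂ) (f : G.Comp) : G.Comp :=
  ⟨fun n => (z ^ n) • f.1 n, by
    intro n
    rw [map_smul, f.2 n]⟩

end Graded


section VOA

/-- A meromorphic open-string vertex algebra (MOSVA): a lower-bounded `ℤ`-graded
space with a vertex operator map (recorded through its coefficients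
`Y u v k = (Y_V)_k(u)v`, the coefficient of `x^{-k-1}` in `Y_V(u,x)v`) and a
vacuum, satisfying the grading, vacuum, `D`-derivative/commutator, rationality and
associativity axioms. -/
structure MOSVA (V : Type*) [AddCommGroup V] [Module ℂ V] where
  gr : ZGrading V
  Y : V →ₗ[ℂ] V →ₗ[ℂ] (ℤ → V)
  vac : V
  /-- lower truncation of vertex operators -/
  trunc : ∀ u v : V, ∃ N : ℤ, ∀ k : ℤ, N ≤ k → Y u v k = 0
  /-- identity property `Y(𝟏,x) = 1` -/
  identity : ∀ (v : V) (k : ℤ), Y vac v k = if k = -1 then v else 0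
  /-- creation property: `Y(u,x)𝟏 ∈ V[[x]]` and `lim_{x→0} Y(u,x)𝟏 = u` -/
  creation : ∀ (u : V) (k : ℤ), 0 ≤ k → Y u vac k = 0
  creation_lim : ∀ u : V, Y u vac (-1) = u
  /-- the `d`-commutator formula, written in terms of coefficients -/
  d_comm : ∀ (u v : V) (k : ℤ),
    gr.d (Y u v k) = Y (gr.d u) v k + (-(k : ℂ) - 1) • Y u v k + Y u (gr.d v) k
  /-- the `D`-derivative property (`D_V u = (Y_V)_{-2}(u)𝟏`) -/
  D_deriv : ∀ (u v : V) (k : ℤ),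
    Y (Y u vac (-2)) v k = (-(k : ℂ)) • Y u v (k - 1)
  /-- the `D`-commutator formula -/
  D_comm : ∀ (u v : V) (k : ℤ),
    Y (Y u v k) vac (-2) - Y u (Y v vac (-2)) k = (-(k : ℂ)) • Y u v (k - 1)
  /-- rationality of products: matrix coefficients of products of vertex operators
  converge absolutely in the ordered region to rational functions with the only
  possible poles at `z i = 0` and `z i = z j` -/
  rationality : ∀ (n : ℕ) (u : Fin n → V) (v : V) (φ : V →ₗ[ℂ] ℂ),
    InGradedDual gr.proj φ → ∃ R : RatFn (Fin n), ∀ z : Fin n → ℂ, OrderedPos z →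
      AbsConvTo (fun k : Fin n → ℤ =>
          φ (compApply n (fun i x => Y (u i) x (k i)) v) * ∏ i, z i ^ (-(k i) - 1))
        (R.eval z)
  /-- rationality of iterates and associativity: products and iterates converge to a
  common rational function -/
  associativity : ∀ (u₁ u₂ v : V) (φ : V →ₗ[ℂ] ℂ), InGradedDual gr.proj φ →
    ∃ R : RatFn (Fin 2),
      (∀ z₁ z₂ : ℂ, ‖z₂‖ < ‖z₁‖ → 0 < ‖z₂‖ →
        AbsConvTo (fun k : ℤ × ℤ =>
            φ (Y u₁ (Y u₂ v k.2) k.1) * z₁ ^ (-k.1 - 1) * z₂ ^ (-k.2 - 1))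
          (R.eval ![z₁, z₂])) ∧
      (∀ z₁ z₂ : ℂ, ‖z₁ - z₂‖ < ‖z₂‖ → 0 < ‖z₁ - z₂‖ →
        AbsConvTo (fun k : ℤ × ℤ =>
            φ (Y (Y u₁ u₂ k.1) v k.2) * (z₁ - z₂) ^ (-k.1 - 1) * z₂ ^ (-k.2 - 1))
          (R.eval ![z₁, z₂]))

variable {V : Type*} [AddCommGroup V] [Module ℂ V]

/-- The operator `D_V`. -/
def MOSVA.D (A : MOSVA V) (v : V) : V := A.Y v A.vac (-2)

/-- The pole-order condition for a MOSVA. -/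
def MOSVA.PoleOrder (A : MOSVA V) : Prop :=
  ∀ u₁ v : V, ∃ C : ℕ, ∀ φ : V →ₗ[ℂ] ℂ, InGradedDual A.gr.proj φ → ∀ u₂ : V,
    ∃ R : RatFn (Fin 2), R.a 0 ≤ C ∧
      ∀ z₁ z₂ : ℂ, ‖z₂‖ < ‖z₁‖ → 0 < ‖z₂‖ →
        AbsConvTo (fun k : ℤ × ℤ =>
            φ (A.Y u₁ (A.Y u₂ v k.2) k.1) * z₁ ^ (-k.1 - 1) * z₂ ^ (-k.2 - 1))
          (R.eval ![z₁, z₂])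

/-- A bimodule for a MOSVA: a `ℂ`-graded space with left and right vertex operator
maps (recorded through their coefficients), satisfying the left module, right module
and compatibility axioms. -/
structure Bimod (A : MOSVA V) (W : Type*) [AddCommGroup W] [Module ℂ W] where
  gr : CGrading W
  YL : V →ₗ[ℂ] W →ₗ[ℂ] (ℤ → W)
  YR : W →ₗ[ℂ] V →ₗ[ℂ] (ℤ → W)
  DW : W →ₗ[ℂ] W
  /-- `D_W` has weight one -/
  DW_wt : ∀ n : ℂ, DW ∘ₗ gr.proj n = gr.proj (n + 1) ∘ₗ DW ∘ₗ gr.proj n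
  truncL : ∀ (u : V) (w : W), ∃ N : ℤ, ∀ k : ℤ, N ≤ k → YL u w k = 0
  truncR : ∀ (w : W) (u : V), ∃ N : ℤ, ∀ k : ℤ, N ≤ k → YR w u k = 0
  identityL : ∀ (w : W) (k : ℤ), YL A.vac w k = if k = -1 then w else 0
  creationR : ∀ (w : W) (k : ℤ), 0 ≤ k → YR w A.vac k = 0
  creationR_lim : ∀ w : W, YR w A.vac (-1) = w
  d_commL : ∀ (u : V) (w : W) (k : ℤ),
    gr.d (YL u w k) = YL (A.gr.d u) w k + (-(k : ℂ) - 1) • YL u w k + YL u (gr.d w) k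
  d_commR : ∀ (w : W) (u : V) (k : ℤ),
    gr.d (YR w u k) = YR (gr.d w) u k + (-(k : ℂ) - 1) • YR w u k + YR w (A.gr.d u) k
  D_derivL : ∀ (u : V) (w : W) (k : ℤ),
    YL (A.D u) w k = (-(k : ℂ)) • YL u w (k - 1)
  D_commL : ∀ (u : V) (w : W) (k : ℤ),
    DW (YL u w k) - YL u (DW w) k = (-(k : ℂ)) • YL u w (k - 1)
  D_derivR : ∀ (w : W) (u : V) (k : ℤ),
    YR (DW w) u k = (-(k : ℂ)) • YR w u (k - 1)
  D_commR : ∀ (w : W) (u : V) (k : ℤ),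
    DW (YR w u k) - YR w (A.D u) k = (-(k : ℂ)) • YR w u (k - 1)
  /-- rationality for products of left vertex operators -/
  rationalityL : ∀ (n : ℕ) (u : Fin n → V) (w : W) (φ : W →ₗ[ℂ] ℂ),
    InGradedDual gr.proj φ → ∃ R : RatFn (Fin n), ∀ z : Fin n → ℂ, OrderedPos z →
      AbsConvTo (fun k : Fin n → ℤ =>
          φ (compApply n (fun i x => YL (u i) x (k i)) w) * ∏ i, z i ^ (-(k i) - 1))
        (R.eval z)
  /-- rationality of iterates and associativity for the left vertex operator map -/
  associativityL : ∀ (u₁ u₂ : V) (w : W) (φ : W →ₗ[ℂ] ℂ), InGradedDual gr.proj φ →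
    ∃ R : RatFn (Fin 2),
      (∀ z₁ z₂ : ℂ, ‖z₂‖ < ‖z₁‖ → 0 < ‖z₂‖ →
        AbsConvTo (fun k : ℤ × ℤ =>
            φ (YL u₁ (YL u₂ w k.2) k.1) * z₁ ^ (-k.1 - 1) * z₂ ^ (-k.2 - 1))
          (R.eval ![z₁, z₂])) ∧
      (∀ z₁ z₂ : ℂ, ‖z₁ - z₂‖ < ‖z₂‖ → 0 < ‖z₁ - z₂‖ →
        AbsConvTo (fun k : ℤ × ℤ =>
            φ (YL (A.Y u₁ u₂ k.1) w k.2) * (z₁ - z₂) ^ (-k.1 - 1) * z₂ ^ (-k.2 - 1))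
          (R.eval ![z₁, z₂]))
  /-- rationality for products `Y_W^R(w,z₁)Y_V(u₁,z₂)⋯Y_V(u_{n-1},z_n)u_n` -/
  rationalityR : ∀ (n : ℕ) (w : W) (v : Fin (n+1) → V) (φ : W →ₗ[ℂ] ℂ),
    InGradedDual gr.proj φ → ∃ R : RatFn (Fin (n+1)),
      ∀ z : Fin (n+1) → ℂ, OrderedPos z →
        AbsConvTo (fun k : Fin (n+1) → ℤ =>
            φ (YR w (compApply n (fun i x => A.Y (v i.castSucc) x (k i.succ))
                (v (Fin.last n))) (k 0)) * ∏ i, z i ^ (-(k i) - 1))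
          (R.eval z)
  /-- rationality of iterates and associativity for the right vertex operator map -/
  associativityR : ∀ (w : W) (u₁ u₂ : V) (φ : W →ₗ[ℂ] ℂ), InGradedDual gr.proj φ →
    ∃ R : RatFn (Fin 2),
      (∀ z₁ z₂ : ℂ, ‖z₂‖ < ‖z₁‖ → 0 < ‖z₂‖ →
        AbsConvTo (fun k : ℤ × ℤ =>
            φ (YR w (A.Y u₁ u₂ k.2) k.1) * z₁ ^ (-k.1 - 1) * z₂ ^ (-k.2 - 1))
          (R.eval ![z₁, z₂])) ∧
      (∀ z₁ z₂ : ℂ, ‖z₁ - z₂‖ < ‖z₂‖ → 0 < ‖z₁ - z₂‖ →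
        AbsConvTo (fun k : ℤ × ℤ =>
            φ (YR (YR w u₁ k.1) u₂ k.2) * (z₁ - z₂) ^ (-k.1 - 1) * z₂ ^ (-k.2 - 1))
          (R.eval ![z₁, z₂]))
  /-- compatibility: rationality of mixed products
  `Y_W^L(u₁,z₁)⋯Y_W^L(u_p,z_p)Y_W^R(w,z₀)Y_V(v₁,⋅)⋯Y_V(v_{q},⋅)v_{q+1}` -/
  compatRat : ∀ (p q : ℕ) (u : Fin p → V) (w : W) (v : Fin (q+1) → V)
      (φ : W →ₗ[ℂ] ℂ), InGradedDual gr.proj φ →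
    ∃ R : RatFn (Fin p ⊕ Fin (q+1)),
      ∀ (zL : Fin p → ℂ) (z0 : ℂ) (zR : Fin q → ℂ),
        Ordered zL → (∀ i, ‖z0‖ < ‖zL i‖) → (∀ j, ‖zR j‖ < ‖z0‖) → Ordered zR →
        0 < ‖z0‖ → (∀ j, 0 < ‖zR j‖) →
        AbsConvTo (fun K : (Fin p → ℤ) × ℤ × (Fin q → ℤ) =>
            φ (compApply p (fun i x => YL (u i) x (K.1 i))
                (YR w (compApply q (fun j x => A.Y (v j.castSucc) x (K.2.2 j))
                  (v (Fin.last q))) K.2.1))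
              * (∏ i, zL i ^ (-(K.1 i) - 1)) * z0 ^ (-K.2.1 - 1)
              * ∏ j, zR j ^ (-(K.2.2 j) - 1))
          (R.eval (Sum.elim zL (Fin.cons z0 zR)))
  /-- compatibility: associativity for the left and right vertex operator maps -/
  compatAssoc : ∀ (u v : V) (w : W) (φ : W →ₗ[ℂ] ℂ), InGradedDual gr.proj φ →
    ∃ R : RatFn (Fin 2),
      (∀ z₁ z₂ : ℂ, ‖z₂‖ < ‖z₁‖ → 0 < ‖z₂‖ →
        AbsConvTo (fun k : ℤ × ℤ =>
            φ (YL u (YR w v k.2) k.1) * z₁ ^ (-k.1 - 1) * z₂ ^ (-k.2 - 1))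
          (R.eval ![z₁, z₂])) ∧
      (∀ z₁ z₂ : ℂ, ‖z₁ - z₂‖ < ‖z₂‖ → 0 < ‖z₁ - z₂‖ →
        AbsConvTo (fun k : ℤ × ℤ =>
            φ (YR (YL u w k.1) v k.2) * (z₁ - z₂) ^ (-k.1 - 1) * z₂ ^ (-k.2 - 1))
          (R.eval ![z₁, z₂]))

variable {W : Type*} [AddCommGroup W] [Module ℂ W] {A : MOSVA V}

/-- The opposite right vertex operator map
`Y_W^{s(R)}(v,x)w = e^{xD_W}Y_W^R(w,-x)v`, through its coefficients. -/
def Bimod.YsR (B : Bimod A W) (v : V) (w : W) (k : ℤ) : W :=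
  ∑ᶠ m : ℕ, (((-1 : ℂ) ^ (k + (m : ℤ) + 1)) * ((m.factorial : ℂ))⁻¹) •
    ((B.DW ^ m) (B.YR w v (k + (m : ℤ))))

/-- The pole-order condition for a bimodule over a MOSVA. -/
def Bimod.PoleOrder (B : Bimod A W) : Prop :=
  (∀ (u₁ : V) (w : W), ∃ C : ℕ, ∀ φ : W →ₗ[ℂ] ℂ, InGradedDual B.gr.proj φ → ∀ u₂ : V,
    ∃ R : RatFn (Fin 2), R.a 0 ≤ C ∧
      ∀ z₁ z₂ : ℂ, ‖z₂‖ < ‖z₁‖ → 0 < ‖z₂‖ →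
        AbsConvTo (fun k : ℤ × ℤ =>
            φ (B.YL u₁ (B.YL u₂ w k.2) k.1) * z₁ ^ (-k.1 - 1) * z₂ ^ (-k.2 - 1))
          (R.eval ![z₁, z₂])) ∧
  (∀ (u₂ : V) (w : W), ∃ C : ℕ, ∀ φ : W →ₗ[ℂ] ℂ, InGradedDual B.gr.proj φ → ∀ u₁ : V,
    ∃ R : RatFn (Fin 2), R.a 0 ≤ C ∧
      ∀ z₁ z₂ : ℂ, ‖z₂‖ < ‖z₁‖ → 0 < ‖z₂‖ →
        AbsConvTo (fun k : ℤ × ℤ =>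
            φ (B.YR w (A.Y u₁ u₂ k.2) k.1) * z₁ ^ (-k.1 - 1) * z₂ ^ (-k.2 - 1))
          (R.eval ![z₁, z₂])) ∧
  (∀ (u₁ u₂ : V), ∃ C : ℕ, ∀ φ : W →ₗ[ℂ] ℂ, InGradedDual B.gr.proj φ → ∀ w : W,
    ∃ R : RatFn (Fin 2), R.a 0 ≤ C ∧
      ∀ z₁ z₂ : ℂ, ‖z₂‖ < ‖z₁‖ → 0 < ‖z₂‖ →
        AbsConvTo (fun k : ℤ × ℤ =>
            φ (B.YL u₁ (B.YR w u₂ k.2) k.1) * z₁ ^ (-k.1 - 1) * z₂ ^ (-k.2 - 1))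
          (R.eval ![z₁, z₂]))

end VOA


section Cochains

variable {V : Type*} [AddCommGroup V] [Module ℂ V]
variable {W : Type*} [AddCommGroup W] [Module ℂ W] {A : MOSVA V}

/-- A `W̄`-valued rational function in the variables `z i`, `i : ι`, with the only
possible poles at `z i = z j`: a map from configuration space to the algebraic
completion whose pairings with graded-dual functionals are such rational functions,
with pole orders uniform in the functional, as witnessed by a formal power series
with coefficients in `W` (condition (ii)). -/
def CGrading.WTilde (G : CGrading W) {ι : Type*} [Fintype ι] [DecidableEq ι]
    (f : (ι → ℂ) → G.Comp) : Prop :=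
  (∀ φ : W →ₗ[ℂ] ℂ, InGradedDual G.proj φ →
      ∃ R : DiagRatFn ι, ∀ z : ι → ℂ, Conf z → G.pair φ (f z) = R.eval z) ∧
  ∃ (p : ι → ι → ℤ) (b : (ι → ℕ) → W),
    ∀ φ : W →ₗ[ℂ] ℂ, InGradedDual G.proj φ →
      (Function.support fun k => φ (b k)).Finite ∧
      ∀ z : ι → ℂ, Conf z →
        (∏ q ∈ Finset.univ.offDiag, (z q.1 - z q.2) ^ (p q.1 q.2)) * G.pair φ (f z)
          = ∑ᶠ k : ι → ℕ, φ (b k) * ∏ i, z i ^ (k i)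

/-- The pattern of left/right vertex operators: the `i`-th operator is
`Y_W^L(u i, z i)` if `isL i`, and `Y_W^{s(R)}(u i, z i)` otherwise; `k` records the
coefficient extracted from each operator. -/
def patOps (B : Bimod A W) {n : ℕ} (isL : Fin n → Bool) (u : Fin n → V)
    (k : Fin n → ℤ) : Fin n → (W → W) :=
  fun i => if isL i then fun x => B.YL (u i) x (k i) else fun x => B.YsR (u i) x (k i)

/-- The pattern with `l` left operators followed by `n - l` opposite right operators. -/
def prefixPat (n l : ℕ) : Fin n → Bool := fun i => decide ((i : ℕ) < l)

/-- A vector `w` such that `Y_W^L(u,x)w ∈ W[[x]]` and `Y_W^{s(R)}(u,x)w ∈ W[[x]]`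
for every `u ∈ V`. -/
def Bimod.RegVec (B : Bimod A W) (w : W) : Prop :=
  ∀ (u : V) (k : ℤ), 0 ≤ k → B.YL u w k = 0 ∧ B.YsR u w k = 0

/-- `f` represents the `W̄`-valued rational function
`E(Y^{L/sR}(u 0, z 0)⋯Y^{L/sR}(u (n-1), z (n-1)) w)` (with the operators prescribed
by the pattern `isL`): `f` is a `W̄`-valued rational function with only diagonal
poles whose pairings are the sums of the corresponding series of matrix coefficients
on the region `|z 0| > ⋯ > |z (n-1)| > 0`. -/
def RepEPat (B : Bimod A W) {n : ℕ} (isL : Fin n → Bool) (u : Fin n → V) (w : W)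
    (f : (Fin n → ℂ) → B.gr.Comp) : Prop :=
  B.gr.WTilde f ∧
  ∀ φ : W →ₗ[ℂ] ℂ, InGradedDual B.gr.proj φ → ∀ z : Fin n → ℂ, OrderedPos z →
    AbsConvTo (fun k : Fin n → ℤ =>
        φ (compApply n (patOps B isL u k) w) * ∏ i, z i ^ (-(k i) - 1))
      (B.gr.pair φ (f z))

/-- `f` represents the `W̄`-valued rational function given by a product of groups of
vertex operators, with group `i` of size `α i` and left/right pattern `isL`;
the variables are indexed by the sigma type `(i : Fin N) × Fin (α i)`. -/
def RepESig (B : Bimod A W) {N : ℕ} (α : Fin N → ℕ)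
    (isL : (i : Fin N) → Fin (α i) → Bool)
    (u : (i : Fin N) → Fin (α i) → V) (w : W)
    (f : (((i : Fin N) × Fin (α i)) → ℂ) → B.gr.Comp) : Prop :=
  B.gr.WTilde f ∧
  ∀ φ : W →ₗ[ℂ] ℂ, InGradedDual B.gr.proj φ →
    ∀ Z : (i : Fin N) → Fin (α i) → ℂ,
      (∀ (i : Fin N) (s t : Fin (α i)), s < t → ‖Z i t‖ < ‖Z i s‖) →
      (∀ (i j : Fin N), i < j → ∀ (s : Fin (α i)) (t : Fin (α j)), ‖Z j t‖ < ‖Z i s‖) →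
      (∀ (i : Fin N) (s : Fin (α i)), 0 < ‖Z i s‖) →
      AbsConvTo (fun K : (i : Fin N) → Fin (α i) → ℤ =>
          φ (compApply N (fun i x => compApply (α i) (fun s y =>
              if isL i s then B.YL (u i s) y (K i s) else B.YsR (u i s) y (K i s)) x) w)
            * ∏ i, ∏ s, Z i s ^ (-(K i s) - 1))
        (B.gr.pair φ (f (fun q => Z q.1 q.2)))

/-- Multilinearity of a map on `n`-tuples of vectors. -/
def IsMultilinear {M : Type*} [AddCommMonoid M] [Module ℂ M] {n : ℕ}
    (Φ : (Fin n → V) → M) : Prop :=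
  (∀ (v : Fin n → V) (i : Fin n) (x y : V),
      Φ (Function.update v i (x + y)) = Φ (Function.update v i x) + Φ (Function.update v i y)) ∧
  ∀ (v : Fin n → V) (i : Fin n) (c : ℂ) (x : V),
      Φ (Function.update v i (c • x)) = c • Φ (Function.update v i x)

/-- The `D`-derivative property of a map `Φ : V^{⊗n} → W̃_{z₁,…,zₙ}`. -/
def DDerivProp (A : MOSVA V) (B : Bimod A W) {n : ℕ}
    (Φ : (Fin n → V) → (Fin n → ℂ) → B.gr.Comp) : Prop :=
  (∀ (v : Fin n → V) (i : Fin n) (φ : W →ₗ[ℂ] ℂ), InGradedDual B.gr.proj φ →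
    ∀ z : Fin n → ℂ, Conf z →
      HasDerivAt (fun t : ℂ => B.gr.pair φ (Φ v (Function.update z i t)))
        (B.gr.pair φ (Φ (Function.update v i (A.D (v i))) z)) (z i)) ∧
  (∀ (v : Fin n → V) (φ : W →ₗ[ℂ] ℂ), InGradedDual B.gr.proj φ →
    ∀ z : Fin n → ℂ, Conf z →
      B.gr.pair φ (B.gr.ext (⇑B.DW) (Φ v z)) =
        ∑ i, B.gr.pair φ (Φ (Function.update v i (A.D (v i))) z))

/-- The `d`-conjugation property of a map `Φ : V^{⊗n} → W̃_{z₁,…,zₙ}`. -/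
def DConjProp (A : MOSVA V) (B : Bimod A W) {n : ℕ}
    (Φ : (Fin n → V) → (Fin n → ℂ) → B.gr.Comp) : Prop :=
  ∀ (v : Fin n → V) (φ : W →ₗ[ℂ] ℂ), InGradedDual B.gr.proj φ →
    ∀ (z : Fin n → ℂ) (c : ℂ), c ≠ 0 → Conf z → Conf (fun i => c * z i) →
      B.gr.pair φ (B.gr.zd c (Φ v z)) =
        B.gr.pair φ (Φ (fun i => A.gr.zd c (v i)) (fun i => c * z i))

/-- Composability of `Φ : V^{⊗n} → W̃` with `m` vertex operators. -/
def ComposableWith (A : MOSVA V) (B : Bimod A W) (n m : ℕ)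
    (Φ : (Fin n → V) → (Fin n → ℂ) → B.gr.Comp) : Prop :=
  ∃ Cb : V → V → ℕ,
  ∀ (α : Fin (n+1) → ℕ), (∑ i, α i) = m + n →
  ∀ l₀ : ℕ, l₀ ≤ α 0 →
  ∀ u : (i : Fin (n+1)) → Fin (α i) → V,
  ∀ φ : W →ₗ[ℂ] ℂ, InGradedDual B.gr.proj φ →
  ∃ R : DiagRatFn ((i : Fin (n+1)) × Fin (α i)),
    (∀ q q' : (i : Fin (n+1)) × Fin (α i), R.b q q' ≤ Cb (u q.1 q.2) (u q'.1 q'.2)) ∧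
    ∀ (z : (i : Fin (n+1)) → Fin (α i) → ℂ) (ζ : Fin n → ℂ),
      (∀ s t : Fin (α 0), s < t → ‖z 0 t‖ < ‖z 0 s‖) →
      (∀ (j : Fin (α 0)) (i : Fin n) (t : Fin (α i.succ)),
          ‖ζ i‖ + ‖z i.succ t - ζ i‖ < ‖z 0 j‖) →
      (∀ (i : Fin n) (s t : Fin (α i.succ)), s < t →
          ‖z i.succ t - ζ i‖ < ‖z i.succ s - ζ i‖) →
      (∀ (i j : Fin n), i < j → ∀ (s : Fin (α i.succ)) (t : Fin (α j.succ)),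
          ‖(z i.succ s - ζ i) - (z j.succ t - ζ j)‖ < ‖ζ i - ζ j‖) →
      AbsConvTo (fun K : (i : Fin (n+1)) → Fin (α i) → ℤ =>
          B.gr.pair φ
            (compApply (α 0) (fun j => B.gr.ext (fun x =>
                if (j : ℕ) < l₀ then B.YL (u 0 j) x (K 0 j) else B.YsR (u 0 j) x (K 0 j)))
              (Φ (fun i => compApply (α i.succ)
                    (fun s x => A.Y (u i.succ s) x (K i.succ s)) A.vac) ζ))
            * (∏ j, z 0 j ^ (-(K 0 j) - 1))
            * ∏ i : Fin n, ∏ s, (z i.succ s - ζ i) ^ (-(K i.succ s) - 1))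
        (R.eval (fun q => z q.1 q.2))

/-- The set `Ĉ^n_m(V,W)`: maps `V^{⊗n} → W̃_{z₁,…,zₙ}` that are linear, satisfy the
`D`-derivative and `d`-conjugation properties and are composable with `m` vertex
operators. -/
def IsCochain (A : MOSVA V) (B : Bimod A W) (n m : ℕ)
    (Φ : (Fin n → V) → (Fin n → ℂ) → B.gr.Comp) : Prop :=
  IsMultilinear Φ ∧ (∀ v, B.gr.WTilde (Φ v)) ∧ DDerivProp A B Φ ∧ DConjProp A B Φ ∧
    ComposableWith A B n m Φ

/-- `Ψ` represents `E_W^{(1,0)} ∘₂ Φ`, i.e. the map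
`v ↦ E(Y_W^L(v 0, z 0) Φ(v 1 ⊗ ⋯ ⊗ v n)(z 1,…,z n))`. -/
def RepLeft (A : MOSVA V) (B : Bimod A W) {n : ℕ}
    (Φ : (Fin n → V) → (Fin n → ℂ) → B.gr.Comp)
    (Ψ : (Fin (n+1) → V) → (Fin (n+1) → ℂ) → B.gr.Comp) : Prop :=
  (∀ v, B.gr.WTilde (Ψ v)) ∧
  ∀ (v : Fin (n+1) → V) (φ : W →ₗ[ℂ] ℂ), InGradedDual B.gr.proj φ →
    ∀ (z₀ : ℂ) (zt : Fin n → ℂ), Conf (Fin.cons z₀ zt) →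
      (∀ i, ‖zt i‖ < ‖z₀‖) → (∀ i, 0 < ‖zt i‖) →
      AbsConvTo (fun k : ℤ =>
          B.gr.pair φ (B.gr.ext (fun x => B.YL (v 0) x k) (Φ (Fin.tail v) zt))
            * z₀ ^ (-k - 1))
        (B.gr.pair φ (Ψ v (Fin.cons z₀ zt)))

/-- `Ψ` represents `E_W^{(0,1)} ∘₂ Φ`, i.e. the map
`v ↦ E(Y_W^{s(R)}(v (n+1), z (n+1)) Φ(v 1 ⊗ ⋯ ⊗ v n)(z 1,…,z n))`. -/
def RepRight (A : MOSVA V) (B : Bimod A W) {n : ℕ}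
    (Φ : (Fin n → V) → (Fin n → ℂ) → B.gr.Comp)
    (Ψ : (Fin (n+1) → V) → (Fin (n+1) → ℂ) → B.gr.Comp) : Prop :=
  (∀ v, B.gr.WTilde (Ψ v)) ∧
  ∀ (v : Fin (n+1) → V) (φ : W →ₗ[ℂ] ℂ), InGradedDual B.gr.proj φ →
    ∀ (zl : ℂ) (zi : Fin n → ℂ), Conf (Fin.snoc zi zl) →
      (∀ i, ‖zi i‖ < ‖zl‖) → (∀ i, 0 < ‖zi i‖) →
      AbsConvTo (fun k : ℤ =>
          B.gr.pair φ (B.gr.ext (fun x => B.YsR (v (Fin.last n)) x k) (Φ (Fin.init v) zi))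
            * zl ^ (-k - 1))
        (B.gr.pair φ (Ψ v (Fin.snoc zi zl)))

/-- Replace the two adjacent entries `i, i+1` of an `(n+1)`-tuple by a single entry. -/
def mergeAt {M : Type*} {n : ℕ} (i : Fin n) (v : Fin (n+1) → M) (a : M) : Fin n → M :=
  fun j => if j < i then v j.castSucc else if j = i then a else v j.succ

/-- `Ψ` represents `Φ ∘ᵢ E_V^{(2)}`, i.e. the map
`v ↦ E(Φ(v 1 ⊗ ⋯ ⊗ Y_V(v i, z i − ζ)Y_V(v (i+1), z (i+1) − ζ)𝟏 ⊗ ⋯ ⊗ v (n+1))(…,ζ,…))`. -/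
def RepCirc (A : MOSVA V) (B : Bimod A W) {n : ℕ} (i : Fin n)
    (Φ : (Fin n → V) → (Fin n → ℂ) → B.gr.Comp)
    (Ψ : (Fin (n+1) → V) → (Fin (n+1) → ℂ) → B.gr.Comp) : Prop :=
  (∀ v, B.gr.WTilde (Ψ v)) ∧
  ∀ (v : Fin (n+1) → V) (φ : W →ₗ[ℂ] ℂ), InGradedDual B.gr.proj φ →
    ∀ (z : Fin (n+1) → ℂ) (ζ : ℂ), Conf z → Conf (mergeAt i z ζ) →
      ‖z i.succ - ζ‖ < ‖z i.castSucc - ζ‖ → 0 < ‖z i.succ - ζ‖ →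
      (∀ j : Fin (n+1), j ≠ i.castSucc → j ≠ i.succ →
        ‖z i.castSucc - ζ‖ < ‖z j - z i.castSucc‖ ∧ ‖z i.succ - ζ‖ < ‖z j - z i.succ‖) →
      AbsConvTo (fun k : ℤ × ℤ =>
          B.gr.pair φ
            (Φ (mergeAt i v (A.Y (v i.castSucc) (A.Y (v i.succ) A.vac k.2) k.1))
              (mergeAt i z ζ))
            * (z i.castSucc - ζ) ^ (-k.1 - 1) * (z i.succ - ζ) ^ (-k.2 - 1))
        (B.gr.pair φ (Ψ v z))

/-- `Ψ` represents the coboundary `δ̂Φ = E_W^{(1,0)}∘₂Φ + Σᵢ (−1)^i Φ∘ᵢE_V^{(2)}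
+ (−1)^{n+1} E_W^{(0,1)}∘₂Φ` of the `n`-cochain `Φ`. -/
def IsDelta (A : MOSVA V) (B : Bimod A W) {n : ℕ}
    (Φ : (Fin n → V) → (Fin n → ℂ) → B.gr.Comp)
    (Ψ : (Fin (n+1) → V) → (Fin (n+1) → ℂ) → B.gr.Comp) : Prop :=
  ∃ (gL gR : (Fin (n+1) → V) → (Fin (n+1) → ℂ) → B.gr.Comp)
    (gC : Fin n → (Fin (n+1) → V) → (Fin (n+1) → ℂ) → B.gr.Comp),
    RepLeft A B Φ gL ∧ RepRight A B Φ gR ∧ (∀ i, RepCirc A B i Φ (gC i)) ∧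
    ∀ v z, Ψ v z = gL v z + (∑ i : Fin n, ((-1 : ℂ) ^ ((i : ℕ) + 1)) • gC i v z)
      + ((-1 : ℂ) ^ (n + 1)) • gR v z

end Cochains


/-- Let `W` be a `ℂ`-graded space with graded dual `W'` and
algebraic completion `W̄`, and let `f : F_nℂ → (W')*` satisfy: (i) all its pairings
with graded-dual functionals are rational functions with only diagonal poles;
(ii) there are integers `p i j` and a formal series `g ∈ W[[x₁,…,xₙ]]` (with
coefficients `b`) such that `∏ (z i − z j)^(p i j) ⟨w', f z⟩ = ⟨w', g(z)⟩` as
polynomial functions. If moreover there is `C : ℂ` such that every coefficient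
`b k` is homogeneous of weight `C + k₁ + ⋯ + kₙ`, then `f` takes values in `W̄`. -/
theorem statement2 {W : Type*} [AddCommGroup W] [Module ℂ W] (G : CGrading W)
    (n : ℕ) (f : (Fin n → ℂ) → (W →ₗ[ℂ] ℂ) → ℂ)
    (hadd : ∀ (z : Fin n → ℂ) (φ ψ : W →ₗ[ℂ] ℂ), InGradedDual G.proj φ →
      InGradedDual G.proj ψ → f z (φ + ψ) = f z φ + f z ψ)
    (hsmul : ∀ (z : Fin n → ℂ) (c : ℂ) (φ : W →ₗ[ℂ] ℂ), InGradedDual G.proj φ →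
      f z (c • φ) = c * f z φ)
    (hrat : ∀ φ : W →ₗ[ℂ] ℂ, InGradedDual G.proj φ →
      ∃ R : DiagRatFn (Fin n), ∀ z : Fin n → ℂ, Conf z → f z φ = R.eval z)
    (p : Fin n → Fin n → ℤ) (b : (Fin n → ℕ) → W)
    (hpoly : ∀ φ : W →ₗ[ℂ] ℂ, InGradedDual G.proj φ →
      (Function.support fun k => φ (b k)).Finite ∧
      ∀ z : Fin n → ℂ, Conf z →
        (∏ q ∈ Finset.univ.offDiag, (z q.1 - z q.2) ^ (p q.1 q.2)) * f z φ
          = ∑ᶠ k : Fin n → ℕ, φ (b k) * ∏ i, z i ^ (k i))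
    (C : ℂ) (hhom : ∀ k : Fin n → ℕ, G.proj (C + ∑ i, (k i : ℂ)) (b k) = b k) :
    ∀ z : Fin n → ℂ, Conf z → ∃ wb : G.Comp, ∀ φ : W →ₗ[ℂ] ℂ,
      InGradedDual G.proj φ → f z φ = G.pair φ wb := by
  classical
  intro z hz
  -- Lemma A: projections of the coefficients
  have hA : ∀ (m : ℂ) (k : Fin n → ℕ),
      G.proj m (b k) = if m = C + ∑ i, (k i : ℂ) then b k else 0 := by
    intro m k
    have h := congrArg (fun T : W →ₗ[ℂ] W => T (b k))
      (G.proj_comp m (C + ∑ i, (k i : ℂ)))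
    simp only [LinearMap.comp_apply] at h
    rw [hhom k] at h
    rw [h]
    split_ifs with hm
    · exact hhom k
    · simp
  -- Lemma: the set of multi-indices with a given total weight is finite
  have hset : ∀ m : ℂ, ({k : Fin n → ℕ | m = C + ∑ i, (k i : ℂ)} : Set _).Finite := by
    intro m
    by_cases h : ∃ N : ℕ, m = C + (N : ℂ)
    · obtain ⟨N, rfl⟩ := h
      apply Set.Finite.subset (Finset.Nat.antidiagonalTuple n N).finite_toSet
      intro k hk
      simp only [Set.mem_setOf_eq] at hk
      have h1 : ((N : ℕ) : ℂ) = ((∑ i, k i : ℕ) : ℂ) := by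
        push_cast
        exact add_left_cancel hk
      have h2 : N = ∑ i, k i := Nat.cast_injective h1
      simp only [Finset.coe_mem, Finset.mem_coe, Finset.Nat.mem_antidiagonalTuple]
      exact h2.symm
    · convert Set.finite_empty
      ext k
      simp only [Set.mem_setOf_eq, Set.mem_empty_iff_false, iff_false]
      intro hk
      exact h ⟨∑ i, k i, by rw [hk]; push_cast; ring⟩
  -- finiteness of the support defining the components
  have hB : ∀ m : ℂ, (Function.support fun k : Fin n → ℕ =>
      (∏ i, z i ^ (k i)) • G.proj m (b k)).Finite := by
    intro m
    apply Set.Finite.subset (hset m)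
    intro k hk
    simp only [Function.mem_support] at hk
    simp only [Set.mem_setOf_eq]
    by_contra hcon
    rw [hA m k, if_neg hcon, smul_zero] at hk
    exact hk rfl
  set P : ℂ := ∏ q ∈ Finset.univ.offDiag, (z q.1 - z q.2) ^ (p q.1 q.2) with hP
  have hPne : P ≠ 0 := by
    rw [hP]
    apply Finset.prod_ne_zero_iff.mpr
    intro q hq
    apply zpow_ne_zero
    rw [sub_ne_zero]
    exact hz q.1 q.2 (Finset.mem_offDiag.mp hq).2.2
  refine ⟨⟨fun m => P⁻¹ • ∑ᶠ k : Fin n → ℕ, (∏ i, z i ^ (k i)) • G.proj m (b k), ?_⟩, ?_⟩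
  · intro m
    show G.proj m _ = _
    rw [map_smul]
    congr 1
    have h1 := AddMonoidHom.map_finsum (G.proj m).toAddMonoidHom (hB m)
    simp only [LinearMap.toAddMonoidHom_coe] at h1
    rw [h1]
    refine finsum_congr fun k => ?_
    simp only [LinearMap.toAddMonoidHom_coe, map_smul]
    congr 1
    have h := congrArg (fun T : W →ₗ[ℂ] W => T (b k)) (G.proj_comp m m)
    simpa using h
  · intro φ hφ
    obtain ⟨hfin, heq⟩ := hpoly φ hφ
    set T : Finset (Fin n → ℕ) := hfin.toFinset with hT
    set M : Finset ℂ := T.image (fun k => C + ∑ i, (k i : ℂ)) with hM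
    have hF : ∀ (m : ℂ) (k : Fin n → ℕ),
        φ ((∏ i, z i ^ (k i)) • G.proj m (b k)) =
          if m = C + ∑ i, (k i : ℂ) then (∏ i, z i ^ (k i)) * φ (b k) else 0 := by
      intro m k
      rw [map_smul, hA m k]
      split_ifs with hm
      · simp [smul_eq_mul]
      · simp
    have hcomp : ∀ m : ℂ,
        φ (P⁻¹ • ∑ᶠ k : Fin n → ℕ, (∏ i, z i ^ (k i)) • G.proj m (b k)) =
          P⁻¹ * ∑ k ∈ T, (if m = C + ∑ i, (k i : ℂ) then (∏ i, z i ^ (k i)) * φ (b k)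
            else 0) := by
      intro m
      rw [map_smul, smul_eq_mul]
      congr 1
      have h1 := AddMonoidHom.map_finsum φ.toAddMonoidHom (hB m)
      simp only [LinearMap.toAddMonoidHom_coe] at h1
      rw [h1]
      rw [finsum_eq_finset_sum_of_support_subset _ (s := T) ?_]
      · exact Finset.sum_congr rfl fun k _ => hF m k
      · intro k hk
        simp only [Function.mem_support] at hk
        rw [hF m k] at hk
        have hbk : φ (b k) ≠ 0 := by
          intro h0
          apply hk
          rw [h0, mul_zero]
          simp
        simpa [hT, Set.Finite.mem_toFinset, Function.mem_support] using hbk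
    show f z φ =
      ∑ᶠ m : ℂ, φ (P⁻¹ • ∑ᶠ k : Fin n → ℕ, (∏ i, z i ^ (k i)) • G.proj m (b k))
    rw [finsum_congr hcomp]
    have hsupM : (Function.support fun m : ℂ =>
        P⁻¹ * ∑ k ∈ T, (if m = C + ∑ i, (k i : ℂ) then
          (∏ i, z i ^ (k i)) * φ (b k) else 0)) ⊆ (M : Set ℂ) := by
      intro m hm
      simp only [Function.mem_support] at hm
      have hsum : (∑ k ∈ T, (if m = C + ∑ i, (k i : ℂ) then
          (∏ i, z i ^ (k i)) * φ (b k) else 0)) ≠ 0 := by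
        intro h0
        rw [h0, mul_zero] at hm
        exact hm rfl
      obtain ⟨k, hkT, hkne⟩ := Finset.exists_ne_zero_of_sum_ne_zero hsum
      have hmk : m = C + ∑ i, (k i : ℂ) := by
        by_contra hcon
        rw [if_neg hcon] at hkne
        exact hkne rfl
      simp only [hM, Finset.coe_image, Set.mem_image, Finset.mem_coe]
      exact ⟨k, hkT, hmk.symm⟩
    rw [finsum_eq_finset_sum_of_support_subset _ hsupM]
    rw [← Finset.mul_sum, Finset.sum_comm]
    have hinner : ∀ k ∈ T, (∑ m ∈ M, (if m = C + ∑ i, (k i : ℂ) then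
        (∏ i, z i ^ (k i)) * φ (b k) else 0)) = (∏ i, z i ^ (k i)) * φ (b k) := by
      intro k hkT
      rw [Finset.sum_ite_eq' M (C + ∑ i, (k i : ℂ))
        (fun _ => (∏ i, z i ^ (k i)) * φ (b k))]
      rw [if_pos]
      exact Finset.mem_image_of_mem _ hkT
    rw [Finset.sum_congr rfl hinner]
    have heqz := heq z hz
    have hsupT : (Function.support fun k : Fin n → ℕ =>
        φ (b k) * ∏ i, z i ^ (k i)) ⊆ (T : Set _) := by
      intro k hk
      simp only [Function.mem_support] at hk
      have : φ (b k) ≠ 0 := fun h0 => hk (by rw [h0, zero_mul])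
      simpa [hT, Set.Finite.mem_toFinset, Function.mem_support] using this
    rw [finsum_eq_finset_sum_of_support_subset _ hsupT] at heqz
    have : f z φ = P⁻¹ * ∑ k ∈ T, φ (b k) * ∏ i, z i ^ (k i) := by
      rw [← heqz, ← hP]
      field_simp
    rw [this]
    congr 1
    exact Finset.sum_congr rfl fun k _ => (mul_comm _ _)

end VA
end
end

section
/- Let V be a MOSVA and W a V-bimodule, and let Φ : V^{⊗n} → W̃_{z_1,…,z_n} be a linear map satisfying the D-derivative property. Then: (1) for all v_1,…,v_n ∈ V, w' ∈ W', (z_1,…,z_n) ∈ F_nℂ, z ∈ ℂ and 1 ≤ i ≤ n with (z_1,…,z_{i−1},z_i+z,z_{i+1},…,z_n) ∈ F_nℂ, the power series expansion of ⟨w', Φ(v_1⊗⋯⊗v_n)(z_1,…,z_{i−1},z_i+z,z_{i+1},…,z_n)⟩ in positive powers of z equals the power series ⟨w', Φ(v_1⊗⋯⊗v_{i−1}⊗e^{zD_V}v_i⊗v_{i+1}⊗⋯⊗v_n)(z_1,…,z_n)⟩, which converges absolutely when |z| < min_{1≤i<j≤n}|z_i−z_j|; and (2) for all such data with (z_1+z,…,z_n+z)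 ∈ F_nℂ, the power series expansion of ⟨w', Φ(v_1⊗⋯⊗v_n)(z_1+z,…,z_n+z)⟩ in positive powers of z equals the power series ⟨w', e^{zD_W}Φ(v_1⊗⋯⊗v_n)(z_1,…,z_n)⟩, which converges absolutely when |z| < min_{1≤i≤n}|z_i|. -/
set_option autoImplicit false
set_option maxHeartbeats 1000000

open scoped BigOperators

noncomputable section

namespace VA

section Aux14

open Metric in
/-- If `h m` is a sequence of functions on a disc each of which is the derivative of the
previous one, then `h 0` is given by its Taylor series, absolutely convergent on the disc. -/
theorem taylor_key {h : ℕ → ℂ → ℂ} {r : ℝ} {t : ℂ}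
    (ht : ‖t‖ < r)
    (hder : ∀ m, ∀ s ∈ Metric.ball (0:ℂ) r, HasDerivAt (h m) (h (m+1) s) s) :
    Summable (fun m : ℕ => ‖((m.factorial : ℂ))⁻¹ * h m 0 * t ^ m‖) ∧
      HasSum (fun m : ℕ => ((m.factorial : ℂ))⁻¹ * h m 0 * t ^ m) (h 0 t) := by
  obtain ⟨R', hR1, hR2⟩ := exists_between ht
  have hR'0 : 0 < R' := lt_of_le_of_lt (norm_nonneg t) hR1
  set R : NNReal := R'.toNNReal with hR
  have hRR' : (R : ℝ) = R' := Real.coe_toNNReal _ hR'0.le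
  have hball : Metric.closedBall (0:ℂ) R ⊆ Metric.ball (0:ℂ) r := by
    rw [hRR']
    exact Metric.closedBall_subset_ball hR2
  have hd : DifferentiableOn ℂ (h 0) (Metric.closedBall (0:ℂ) R) := fun x hx =>
    ((hder 0 x (hball hx)).differentiableAt).differentiableWithinAt
  have hRpos : 0 < R := by rw [← NNReal.coe_pos, hRR']; exact hR'0
  have H := hd.hasFPowerSeriesOnBall hRpos
  set p := cauchyPowerSeries (h 0) 0 R with hp
  have iter : ∀ m, ∀ s ∈ Metric.ball (0:ℂ) r, iteratedDeriv m (h 0) s = h m s := by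
    intro m
    induction m with
    | zero => intro s _; simp [iteratedDeriv_zero]
    | succ m ih =>
      intro s hs
      rw [iteratedDeriv_succ]
      have heq : iteratedDeriv m (h 0) =ᶠ[nhds s] h m :=
        Filter.eventuallyEq_of_mem (Metric.isOpen_ball.mem_nhds hs) ih
      rw [heq.deriv_eq, (hder m s hs).deriv]
  have h0ball : (0:ℂ) ∈ Metric.ball (0:ℂ) r := by
    simpa using lt_of_le_of_lt (norm_nonneg t) ht
  have key : ∀ m : ℕ, p m (fun _ => t) = ((m.factorial : ℂ))⁻¹ * h m 0 * t ^ m := by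
    intro m
    have h1 := H.factorial_smul t m
    have h2 : iteratedFDeriv ℂ m (h 0) 0 (fun _ => t) = t ^ m • iteratedDeriv m (h 0) 0 := by
      have := (iteratedFDeriv ℂ m (h 0) 0).map_smul_univ (fun _ => t) (fun _ => 1)
      simpa [iteratedDeriv_eq_iteratedFDeriv, Finset.prod_const, smul_eq_mul] using this
    rw [h2, iter m 0 h0ball] at h1
    have hfac : ((m.factorial : ℂ)) ≠ 0 := Nat.cast_ne_zero.mpr m.factorial_ne_zero
    have h3 : (m.factorial : ℂ) * p m (fun _ => t) = t ^ m * h m 0 := by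
      simpa [nsmul_eq_mul, smul_eq_mul] using h1
    have h4 : p m (fun _ => t) = ((m.factorial : ℂ))⁻¹ * (t ^ m * h m 0) := by
      rw [← h3, inv_mul_cancel_left₀ hfac]
    rw [h4]; ring
  have htR : (‖t‖₊ : ENNReal) < (R : ENNReal) := by
    rw [ENNReal.coe_lt_coe, ← NNReal.coe_lt_coe, coe_nnnorm, hRR']; exact hR1
  constructor
  · have hmem : t ∈ Metric.eball (0:ℂ) p.radius := by
      rw [EMetric.mem_ball, edist_zero_right]
      exact lt_of_lt_of_le htR H.r_le
    have hs := p.summable_norm_apply (x := t) hmem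
    refine hs.congr fun m => ?_
    rw [key m]
  · have hmem : t ∈ Metric.eball (0:ℂ) (R : ENNReal) := by
      rw [EMetric.mem_ball, edist_zero_right]
      exact htR
    have := H.hasSum hmem
    rw [zero_add] at this
    exact HasSum.congr_fun this fun m => (key m).symm

variable {V : Type*} [AddCommGroup V] [Module ℂ V]
variable {W : Type*} [AddCommGroup W] [Module ℂ W] {A : MOSVA V}

/-- `D_W^m` raises weights by `m`. -/
lemma DWpow_wt' (B : Bimod A W) (m : ℕ) (nn : ℂ) (w : W) :
    B.gr.proj (nn + m) ((B.DW ^ m) (B.gr.proj nn w)) = (B.DW ^ m) (B.gr.proj nn w) := by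
  induction m with
  | zero =>
    simp only [pow_zero, Nat.cast_zero, add_zero, Module.End.one_apply]
    have := congrArg (fun T : W →ₗ[ℂ] W => T w) (B.gr.proj_comp nn nn)
    simpa using this
  | succ m ih =>
    have hpow : (B.DW ^ (m+1)) (B.gr.proj nn w) = B.DW ((B.DW ^ m) (B.gr.proj nn w)) := by
      rw [pow_succ']; rfl
    have hcast : nn + ((m + 1 : ℕ) : ℂ) = (nn + m) + 1 := by push_cast; ring
    rw [hpow, hcast]
    have hwt := congrArg (fun T : W →ₗ[ℂ] W => T ((B.DW ^ m) (B.gr.proj nn w)))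
      (B.DW_wt (nn + m))
    simp only [LinearMap.comp_apply] at hwt
    rw [ih] at hwt
    exact hwt.symm

/-- The component formula for the extension of `D_W^m` to the completion. -/
lemma ext_DWpow_apply (B : Bimod A W) (m : ℕ) (f : B.gr.Comp) (a : ℂ) :
    (B.gr.ext (⇑(B.DW ^ m)) f).1 a = (B.DW ^ m) (f.1 (a - m)) := by
  have hterm : ∀ nn : ℂ, B.gr.proj a ((B.DW ^ m) (f.1 nn))
      = if a = nn + m then (B.DW ^ m) (f.1 nn) else 0 := by
    intro nn
    have hf : B.gr.proj nn (f.1 nn) = f.1 nn := f.2 nn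
    have h1 : (B.DW ^ m) (f.1 nn) = B.gr.proj (nn + m) ((B.DW ^ m) (f.1 nn)) := by
      have := DWpow_wt' B m nn (f.1 nn)
      rw [hf] at this
      exact this.symm
    by_cases hc : a = nn + (m : ℂ)
    · subst hc
      rw [if_pos rfl]
      exact h1.symm
    · rw [if_neg hc, h1]
      have h2 := congrArg (fun T : W →ₗ[ℂ] W => T ((B.DW ^ m) (f.1 nn)))
        (B.gr.proj_comp a (nn + m))
      simp only [LinearMap.comp_apply] at h2
      rw [if_neg hc] at h2
      simpa using h2
  show (∑ᶠ nn : ℂ, B.gr.proj a ((B.DW ^ m) (f.1 nn))) = _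
  rw [finsum_congr hterm, finsum_eq_single _ (a - (m : ℂ))
    (fun x hx => if_neg (fun hc => hx (by rw [hc]; ring)))]
  rw [if_pos (by ring)]

/-- Pairing against the extension of `D_W^m` is pairing against `φ ∘ D_W^m`. -/
lemma pair_ext_DWpow (B : Bimod A W) (m : ℕ) (φ : W →ₗ[ℂ] ℂ) (f : B.gr.Comp) :
    B.gr.pair φ (B.gr.ext (⇑(B.DW ^ m)) f) = B.gr.pair (φ ∘ₗ (B.DW ^ m)) f := by
  show (∑ᶠ nn : ℂ, φ ((B.gr.ext (⇑(B.DW ^ m)) f).1 nn))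
      = ∑ᶠ nn : ℂ, (φ ∘ₗ (B.DW ^ m)) (f.1 nn)
  have h1 : ∀ nn : ℂ, φ ((B.gr.ext (⇑(B.DW ^ m)) f).1 nn)
      = (fun a : ℂ => φ ((B.DW ^ m) (f.1 a))) ((Equiv.subRight (m : ℂ)) nn) := by
    intro nn
    rw [ext_DWpow_apply]
    rfl
  rw [finsum_congr h1]
  exact finsum_comp_equiv (M := ℂ) (e := Equiv.subRight (m : ℂ))
    (f := fun a : ℂ => φ ((B.DW ^ m) (f.1 a)))

/-- Composing a graded-dual functional with `D_W^m` stays in the graded dual. -/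
lemma inDual_comp_DWpow (B : Bimod A W) (m : ℕ) (φ : W →ₗ[ℂ] ℂ)
    (hφ : InGradedDual B.gr.proj φ) : InGradedDual B.gr.proj (φ ∘ₗ (B.DW ^ m)) := by
  have hsub : (Function.support fun nn : ℂ => (φ ∘ₗ (B.DW ^ m)) ∘ₗ B.gr.proj nn)
      ⊆ (fun nn : ℂ => nn + m) ⁻¹' (Function.support fun nn : ℂ => φ ∘ₗ B.gr.proj nn) := by
    intro nn hnn
    simp only [Set.mem_preimage, Function.mem_support] at hnn ⊢
    intro hc
    apply hnn
    ext w
    simp only [LinearMap.comp_apply, LinearMap.zero_apply]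
    rw [← DWpow_wt' B m nn w]
    have h2 := congrArg (fun T : W →ₗ[ℂ] ℂ => T ((B.DW ^ m) (B.gr.proj nn w))) hc
    simpa using h2
  exact (hφ.preimage ((add_left_injective ((m : ℕ) : ℂ)).injOn)).subset hsub

/-- Evaluation of a multivariate polynomial is differentiable. -/
lemma mvpoly_differentiable {ι : Type*} [Fintype ι] (P : MvPolynomial ι ℂ) :
    Differentiable ℂ (fun w : ι → ℂ => MvPolynomial.eval w P) := by
  induction P using MvPolynomial.induction_on with
  | C a =>
    simp only [MvPolynomial.eval_C]
    exact differentiable_const a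
  | add p q hp hq =>
    simp only [map_add]
    exact hp.add hq
  | mul_X p i hp =>
    simp only [map_mul, MvPolynomial.eval_X]
    exact hp.mul (ContinuousLinearMap.proj i : (ι → ℂ) →L[ℂ] ℂ).differentiable

/-- The configuration space is open. -/
lemma isOpen_conf {ι : Type*} [Finite ι] : IsOpen {w : ι → ℂ | Conf w} := by
  have hset : {w : ι → ℂ | Conf w}
      = ⋂ q : ι × ι, {w : ι → ℂ | q.1 ≠ q.2 → w q.1 ≠ w q.2} := by
    ext w
    simp only [Set.mem_setOf_eq, Set.mem_iInter]
    exact ⟨fun h q => h q.1 q.2, fun h p q hpq => h (p, q) hpq⟩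
  rw [hset]
  refine isOpen_iInter_of_finite fun q => ?_
  by_cases hq : q.1 = q.2
  · convert isOpen_univ
    ext w
    simp [hq]
  · have h2 : {w : ι → ℂ | q.1 ≠ q.2 → w q.1 ≠ w q.2} = {w : ι → ℂ | w q.1 ≠ w q.2} := by
      ext w
      simp [hq]
    rw [h2]
    exact isOpen_ne_fun (continuous_apply q.1) (continuous_apply q.2)

end Aux14

/-- Let `V` be a MOSVA, `W` a `V`-bimodule and
`Φ : V^{⊗n} → W̃_{z₁,…,zₙ}` a linear map with the `D`-derivative property. Then:
(1) for every `i`, `w' ∈ W'` and `(z₁,…,zₙ) ∈ F_nℂ`, the power series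
`⟨w', Φ(v₁⊗⋯⊗e^{tD_V}v_i⊗⋯⊗vₙ)(z)⟩ = Σ_m (1/m!)⟨w', Φ(…D_V^m v_i…)(z)⟩ t^m`
converges absolutely for `|t| < min_{p≠q}|z_p − z_q|` to
`⟨w', Φ(v)(z₁,…,z_i + t,…,zₙ)⟩`; and (2) the power series
`⟨w', e^{tD_W}Φ(v)(z)⟩ = Σ_m (1/m!)⟨w', D_W^m Φ(v)(z)⟩ t^m` converges absolutely
for `|t| < min_i |z_i|` to `⟨w', Φ(v)(z₁+t,…,zₙ+t)⟩`. -/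
theorem statement14 {V : Type*} [AddCommGroup V] [Module ℂ V]
    {W : Type*} [AddCommGroup W] [Module ℂ W]
    (A : MOSVA V) (B : Bimod A W) (n : ℕ)
    (Φ : (Fin n → V) → (Fin n → ℂ) → B.gr.Comp)
    (hlin : IsMultilinear Φ) (hWT : ∀ v, B.gr.WTilde (Φ v))
    (hD : DDerivProp A B Φ) :
    (∀ (v : Fin n → V) (i : Fin n) (φ : W →ₗ[ℂ] ℂ), InGradedDual B.gr.proj φ →
      ∀ z : Fin n → ℂ, Conf z → ∀ t : ℂ,
        (∀ p q : Fin n, p ≠ q → ‖t‖ < ‖z p - z q‖) →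
        AbsConvTo (fun m : ℕ =>
            ((m.factorial : ℂ))⁻¹ *
              B.gr.pair φ (Φ (Function.update v i ((A.D)^[m] (v i))) z) * t ^ m)
          (B.gr.pair φ (Φ v (Function.update z i (z i + t))))) ∧
    (∀ (v : Fin n → V) (φ : W →ₗ[ℂ] ℂ), InGradedDual B.gr.proj φ →
      ∀ z : Fin n → ℂ, Conf z → ∀ t : ℂ, (∀ i, ‖t‖ < ‖z i‖) →
        AbsConvTo (fun m : ℕ =>
            ((m.factorial : ℂ))⁻¹ *
              B.gr.pair φ (B.gr.ext (⇑(B.DW ^ m)) (Φ v z)) * t ^ m)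
          (B.gr.pair φ (Φ v (fun i => z i + t)))) := by
  constructor
  · -- Part (1)
    intro v i φ hφ z hz t ht
    classical
    obtain ⟨r, htr, hconf⟩ : ∃ r : ℝ, ‖t‖ < r ∧ ∀ s : ℂ, ‖s‖ < r →
        Conf (Function.update z i (z i + s)) := by
      by_cases hne : (Finset.univ.offDiag : Finset (Fin n × Fin n)).Nonempty
      · refine ⟨(Finset.univ.offDiag).inf' hne (fun q => ‖z q.1 - z q.2‖), ?_, ?_⟩
        · rw [Finset.lt_inf'_iff]
          intro q hq
          exact ht q.1 q.2 (Finset.mem_offDiag.mp hq).2.2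
        · intro s hs p q hpq
          have hlt : ∀ a b : Fin n, a ≠ b → ‖s‖ < ‖z a - z b‖ := by
            intro a b hab
            have hmem : (a, b) ∈ (Finset.univ.offDiag : Finset (Fin n × Fin n)) :=
              Finset.mem_offDiag.mpr ⟨Finset.mem_univ _, Finset.mem_univ _, hab⟩
            have hle := Finset.inf'_le (fun q : Fin n × Fin n => ‖z q.1 - z q.2‖) hmem
            exact lt_of_lt_of_le hs hle
          rcases eq_or_ne p i with rfl | hpi
          · rw [Function.update_self, Function.update_of_ne (Ne.symm hpq)]
            intro hcon
            have hseq : s = z q - z p := by linear_combination hcon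
            have h2 := hlt q p (Ne.symm hpq)
            rw [← hseq] at h2
            exact lt_irrefl _ h2
          · rcases eq_or_ne q i with rfl | hqi
            · rw [Function.update_self, Function.update_of_ne hpi]
              intro hcon
              have hseq : s = z p - z q := by linear_combination -hcon
              have h2 := hlt p q hpq
              rw [← hseq] at h2
              exact lt_irrefl _ h2
            · rw [Function.update_of_ne hpi, Function.update_of_ne hqi]
              exact hz p q hpq
      · refine ⟨‖t‖ + 1, by linarith, ?_⟩
        intro s hs p q hpq
        exact (hne ⟨(p, q), Finset.mem_offDiag.mpr
          ⟨Finset.mem_univ _, Finset.mem_univ _, hpq⟩⟩).elim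
    have hder : ∀ m : ℕ, ∀ s ∈ Metric.ball (0:ℂ) r, HasDerivAt
        (fun s' : ℂ => B.gr.pair φ (Φ (Function.update v i ((A.D)^[m] (v i)))
          (Function.update z i (z i + s'))))
        (B.gr.pair φ (Φ (Function.update v i ((A.D)^[m+1] (v i)))
          (Function.update z i (z i + s)))) s := by
      intro m s hs
      rw [Metric.mem_ball, dist_zero_right] at hs
      have hc := hconf s hs
      have H := hD.1 (Function.update v i ((A.D)^[m] (v i))) i φ hφ
        (Function.update z i (z i + s)) hc
      simp only [Function.update_idem, Function.update_self] at H
      rw [← Function.iterate_succ_apply' A.D m (v i)] at H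
      have Hinner : HasDerivAt (fun s' : ℂ => z i + s') 1 s := by
        simpa using (hasDerivAt_id s).const_add (z i)
      have H2 := H.comp s Hinner
      rw [mul_one] at H2
      exact H2
    have key := taylor_key (h := fun m s => B.gr.pair φ
      (Φ (Function.update v i ((A.D)^[m] (v i))) (Function.update z i (z i + s))))
      htr hder
    have e1 : Function.update z i (z i + (0:ℂ)) = z := by
      rw [add_zero]
      exact Function.update_eq_self i z
    have e2 : Function.update v i ((A.D)^[0] (v i)) = v := by
      simp only [Function.iterate_zero, id_eq]
      exact Function.update_eq_self i v
    simp only [e1, e2] at key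
    exact ⟨key.1, key.2⟩
  · -- Part (2)
    intro v φ hφ z hz t _
    classical
    have hGdiff : ∀ (ψ : W →ₗ[ℂ] ℂ), InGradedDual B.gr.proj ψ → ∀ w : Fin n → ℂ, Conf w →
        DifferentiableAt ℂ (fun w' : Fin n → ℂ => B.gr.pair ψ (Φ v w')) w := by
      intro ψ hψ w hw
      obtain ⟨R, hR⟩ := (hWT v).1 ψ hψ
      have hev : (fun w' : Fin n → ℂ => B.gr.pair ψ (Φ v w')) =ᶠ[nhds w]
          (fun w' => R.eval w') :=
        Filter.eventuallyEq_of_mem (isOpen_conf.mem_nhds hw) (fun w' hw' => hR w' hw')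
      have hprod : ∀ T : Finset (Fin n × Fin n), DifferentiableAt ℂ
          (fun w' : Fin n → ℂ => ∏ q ∈ T, (w' q.1 - w' q.2) ^ R.b q.1 q.2) w := by
        intro T
        induction T using Finset.induction_on with
        | empty =>
          simp only [Finset.prod_empty]
          exact differentiableAt_const 1
        | insert q T hq ih =>
          simp only [Finset.prod_insert hq]
          refine DifferentiableAt.mul ?_ ih
          exact (((ContinuousLinearMap.proj _ : (Fin n → ℂ) →L[ℂ] ℂ).differentiable.sub
            (ContinuousLinearMap.proj _ : (Fin n → ℂ) →L[ℂ] ℂ).differentiable).pow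
              _).differentiableAt
      have hne0 : (∏ q ∈ Finset.univ.offDiag, (w q.1 - w q.2) ^ R.b q.1 q.2) ≠ 0 := by
        refine Finset.prod_ne_zero_iff.mpr fun q hq => ?_
        exact pow_ne_zero _ (sub_ne_zero_of_ne
          (hw q.1 q.2 (Finset.mem_offDiag.mp hq).2.2))
      have hRdiff : DifferentiableAt ℂ (fun w' : Fin n → ℂ => R.eval w') w := by
        unfold DiagRatFn.eval
        simp only [div_eq_mul_inv]
        exact ((mvpoly_differentiable R.num).differentiableAt).mul
          ((hprod Finset.univ.offDiag).inv hne0)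
      exact (hev.differentiableAt_iff).mpr hRdiff
    have hconf2 : ∀ s : ℂ, Conf (fun j => z j + s) := by
      intro s p q hpq hc
      exact hz p q hpq (by linear_combination hc)
    have hder : ∀ m : ℕ, ∀ s ∈ Metric.ball (0:ℂ) (‖t‖ + 1), HasDerivAt
        (fun s' : ℂ => B.gr.pair (φ ∘ₗ (B.DW ^ m)) (Φ v (fun j => z j + s')))
        (B.gr.pair (φ ∘ₗ (B.DW ^ (m+1))) (Φ v (fun j => z j + s))) s := by
      intro m s _
      set ψ := φ ∘ₗ (B.DW ^ m) with hψdef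
      have hψ : InGradedDual B.gr.proj ψ := inDual_comp_DWpow B m φ hφ
      set ws : Fin n → ℂ := fun j => z j + s with hws
      have hcs : Conf ws := hconf2 s
      have hGd := hGdiff ψ hψ ws hcs
      set G : (Fin n → ℂ) → ℂ := fun w' => B.gr.pair ψ (Φ v w') with hGdef
      have hpartial : ∀ j : Fin n, (fderiv ℂ G ws) (Pi.single j (1:ℂ) : Fin n → ℂ)
          = B.gr.pair ψ (Φ (Function.update v j (A.D (v j))) ws) := by
        intro j
        set PS : Fin n → ℂ := Pi.single j (1:ℂ) with hPS
        have hupd : ∀ tt : ℂ, Function.update ws j tt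
            = ws + (tt - ws j) • PS := by
          intro tt
          funext k
          rcases eq_or_ne k j with rfl | hk
          · simp [hPS]
          · simp [hPS, Function.update_of_ne hk, Pi.single_eq_of_ne hk]
        have haff : HasDerivAt (fun tt : ℂ => ws + (tt - ws j) • PS) PS (ws j) := by
          have h0 : HasDerivAt (fun tt : ℂ => (tt - ws j) • PS)
              ((1:ℂ) • PS) (ws j) :=
            ((hasDerivAt_id (ws j)).sub_const (ws j)).smul_const _
          simpa using h0.const_add ws
        have hf : HasFDerivAt G (fderiv ℂ G ws)
            ((fun tt : ℂ => ws + (tt - ws j) • PS) (ws j)) := by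
          simp only [sub_self, zero_smul, add_zero]
          exact hGd.hasFDerivAt
        have hcomp0 := hf.comp_hasDerivAt (ws j) haff
        have heqf : (fun tt : ℂ => B.gr.pair ψ (Φ v (Function.update ws j tt)))
            = G ∘ (fun tt : ℂ => ws + (tt - ws j) • PS) := by
          funext tt
          simp only [Function.comp_apply, hGdef]
          rw [hupd tt]
        have hcomp : HasDerivAt (fun tt : ℂ => B.gr.pair ψ (Φ v (Function.update ws j tt)))
            ((fderiv ℂ G ws) PS) (ws j) := by
          rw [heqf]
          exact hcomp0
        have hpd := hD.1 v j ψ hψ ws hcs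
        exact HasDerivAt.unique hcomp hpd
      have hinner : HasDerivAt (fun s' : ℂ => z + s' • (fun _ : Fin n => (1:ℂ)))
          (fun _ : Fin n => (1:ℂ)) s := by
        have h0 : HasDerivAt (fun s' : ℂ => s' • (fun _ : Fin n => (1:ℂ)))
            ((1:ℂ) • fun _ : Fin n => (1:ℂ)) s := (hasDerivAt_id s).smul_const _
        simpa using h0.const_add z
      have hptfix : ∀ s' : ℂ, z + s' • (fun _ : Fin n => (1:ℂ)) = fun j => z j + s' := by
        intro s'
        funext j
        simp [smul_eq_mul]
      have hf2 : HasFDerivAt G (fderiv ℂ G ws) (z + s • (fun _ : Fin n => (1:ℂ))) := by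
        rw [hptfix s]
        exact hGd.hasFDerivAt
      have htot := hf2.comp_hasDerivAt s hinner
      have heqf2 : G ∘ (fun s' : ℂ => z + s' • (fun _ : Fin n => (1:ℂ)))
          = fun s' : ℂ => B.gr.pair ψ (Φ v (fun j => z j + s')) := by
        funext s'
        simp only [Function.comp_apply, hGdef]
        rw [hptfix s']
      rw [heqf2] at htot
      have hval : (fderiv ℂ G ws) (fun _ : Fin n => (1:ℂ))
          = B.gr.pair (φ ∘ₗ (B.DW ^ (m+1))) (Φ v ws) := by
        have hsingle : (fun _ : Fin n => (1:ℂ))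
            = ∑ j : Fin n, (Pi.single j (1:ℂ) : Fin n → ℂ) :=
          (Finset.univ_sum_single (fun _ : Fin n => (1:ℂ))).symm
        rw [hsingle, map_sum, Finset.sum_congr rfl (fun j _ => hpartial j),
          ← hD.2 v ψ hψ ws hcs]
        have h1 : (⇑B.DW : W → W) = ⇑(B.DW ^ 1) := by rw [pow_one]
        rw [h1, pair_ext_DWpow]
        congr 1
      rw [hval] at htot
      exact htot
    have htr : ‖t‖ < ‖t‖ + 1 := by linarith [norm_nonneg t]
    have key := taylor_key (h := fun (m : ℕ) (s : ℂ) =>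
      B.gr.pair (φ ∘ₗ (B.DW ^ m)) (Φ v (fun j => z j + s))) htr hder
    have e1 : (fun j : Fin n => z j + (0:ℂ)) = z := by
      funext j
      rw [add_zero]
    have e2 : φ ∘ₗ (B.DW ^ 0) = φ := by
      ext w
      simp
    simp only [e1] at key
    constructor
    · refine key.1.congr fun m => ?_
      simp only [pair_ext_DWpow]
    · have h2 := key.2
      rw [e2] at h2
      refine HasSum.congr_fun h2 fun m => ?_
      simp only [pair_ext_DWpow]

end VA
end
end

section
/- Let V be a MOSVA and W a V-bimodule, and let Φ : V^{⊗n} → W̃_{z_1,…,z_n} be a linear map satisfying the D-derivative and d-conjugation properties. Then for all u^{(1)},…,u^{(n)} ∈ V, the series Φ(Y_V(u^{(1)},z^{(1)}−ζ_1)𝟏 ⊗ Y_V(u^{(2)},z^{(2)}−ζ_2)𝟏 ⊗ ⋯ ⊗ Y_V(u^{(n)},z^{(n)}−ζ_n)𝟏)(ζ_1,…,ζ_n) converges absolutely when |ζ_i−ζ_j| > |z^{(i)}−ζ_i| + |z^{(j)}−ζ_j| for all 1 ≤ i < j ≤ n, to Φ(u^{(1)}⊗⋯⊗u^{(n)})(z^{(1)},…,z^{(n)}).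 -/
set_option autoImplicit false
set_option maxHeartbeats 1000000

open scoped BigOperators

noncomputable section

namespace VA

open Metric in
lemma cauchyEst {f : ℂ → ℂ} {c : ℂ} {R r M : ℝ} (hR0 : 0 < R) (hRr : R < r)
    (hf : DifferentiableOn ℂ f (ball c r))
    (hM : ∀ z ∈ sphere c R, ‖f z‖ ≤ M) (m : ℕ) :
    ‖iteratedDeriv m f c‖ ≤ m.factorial * M / R ^ m := by
  set R' : NNReal := ⟨R, hR0.le⟩ with hR'
  have hcoe : (R' : ℝ) = R := rfl
  have hR0' : 0 < R' := by exact_mod_cast hR0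
  have h := (hf.mono (by rw [hcoe]; exact closedBall_subset_ball hRr)).hasFPowerSeriesOnBall hR0'
  have key : iteratedDeriv m f c = m.factorial • ((cauchyPowerSeries f c R' m) fun _ => (1:ℂ)) := by
    rw [iteratedDeriv_eq_iteratedFDeriv, ← h.factorial_smul (1:ℂ) m]
  have hMnn : 0 ≤ M := by
    obtain ⟨z, hz⟩ := (NormedSpace.sphere_nonempty (x := c) (r := (R':ℝ))).mpr hR0.le
    exact (norm_nonneg _).trans (hM z hz)
  have hcont : ContinuousOn (fun θ : ℝ => ‖f (circleMap c R' θ)‖) (Set.uIcc 0 (2*Real.pi)) := by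
    apply ContinuousOn.norm
    apply hf.continuousOn.comp (continuous_circleMap c R').continuousOn
    intro θ _
    have := circleMap_mem_sphere c (show (0:ℝ) ≤ (R':ℝ) from hR0.le) θ
    exact mem_ball.mpr (by rw [mem_sphere] at this; rw [this, hcoe]; exact hRr)
  have hint : IntervalIntegrable (fun θ : ℝ => ‖f (circleMap c R' θ)‖) MeasureTheory.volume 0 (2*Real.pi) :=
    hcont.intervalIntegrable
  have hIle : (∫ θ : ℝ in (0)..2 * Real.pi, ‖f (circleMap c R' θ)‖) ≤ 2 * Real.pi * M := by
    have := intervalIntegral.integral_mono_on (μ := MeasureTheory.volume)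
      (f := fun θ : ℝ => ‖f (circleMap c R' θ)‖) (g := fun _ => M)
      (by positivity) hint intervalIntegrable_const ?_
    · simpa using this
    · intro θ _
      exact hM _ (by simpa [hcoe] using circleMap_mem_sphere c (show (0:ℝ) ≤ (R':ℝ) from hR0.le) θ)
  have hnorm1 : ‖(cauchyPowerSeries f c R' m) fun _ => (1:ℂ)‖ ≤ M / R ^ m := by
    refine le_trans ((cauchyPowerSeries f c R' m).le_opNorm _) ?_
    have h1 : (∏ _i : Fin m, ‖(1:ℂ)‖) = 1 := by simp
    rw [h1, mul_one]
    refine le_trans (norm_cauchyPowerSeries_le f c R' m) ?_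
    rw [show |(R':ℝ)| = R from by rw [hcoe]; exact abs_of_nonneg hR0.le]
    have h2 : (2 * Real.pi)⁻¹ * (∫ θ : ℝ in (0)..2 * Real.pi, ‖f (circleMap c R' θ)‖) ≤ M := by
      rw [inv_mul_le_iff₀ (by positivity)]
      linarith [hIle]
    calc (2 * Real.pi)⁻¹ * (∫ θ : ℝ in (0)..2 * Real.pi, ‖f (circleMap c R' θ)‖) * (R:ℝ)⁻¹ ^ m
        ≤ M * (R:ℝ)⁻¹ ^ m := by
          apply mul_le_mul_of_nonneg_right h2 (by positivity)
      _ = M / (R:ℝ) ^ m := by rw [inv_pow, div_eq_mul_inv]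
  rw [key]
  have : ‖m.factorial • ((cauchyPowerSeries f c R' m) fun _ => (1:ℂ))‖
      = m.factorial * ‖(cauchyPowerSeries f c R' m) fun _ => (1:ℂ)‖ := by
    rw [nsmul_eq_mul]
    simp
  rw [this]
  calc (m.factorial : ℝ) * ‖(cauchyPowerSeries f c R' m) fun _ => (1:ℂ)‖
      ≤ m.factorial * (M / R ^ m) := by
        apply mul_le_mul_of_nonneg_left hnorm1 (by positivity)
    _ = m.factorial * M / R ^ m := by ring

lemma hasSum_of_fiberwise {α β : Type*} {f : α × β → ℂ} {g : α → ℂ} {S : ℂ}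
    (hnorm : Summable fun p => ‖f p‖) (hfib : ∀ a, HasSum (fun b => f (a, b)) (g a))
    (hg : HasSum g S) : HasSum f S := by
  have hs : Summable f := hnorm.of_norm
  have h2 : HasSum g (∑' p, f p) := hs.hasSum.prod_fiberwise hfib
  exact (hg.unique h2) ▸ hs.hasSum

lemma snoc_inj {k : ℕ} {γ : Type*} :
    Function.Injective (fun p : (Fin k → γ) × γ => (Fin.snoc p.1 p.2 : Fin (k+1) → γ)) := by
  intro p p' h
  have h2 := congrFun h (Fin.last k)
  simp only [Fin.snoc_last] at h2
  have h1 : p.1 = p'.1 := by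
    funext i
    have := congrFun h i.castSucc
    simpa [Fin.snoc_castSucc] using this
  exact Prod.ext h1 h2

lemma summable_pi_pow : ∀ {k : ℕ} (q : Fin k → ℝ), (∀ i, 0 ≤ q i) → (∀ i, q i < 1) →
    Summable (fun m : Fin k → ℕ => ∏ i, q i ^ m i) := by
  intro k
  induction k with
  | zero =>
    intro q _ _
    apply (hasSum_single (f := fun m : Fin 0 → ℕ => ∏ i, q i ^ m i) (fun _ => 0)
      (fun b hb => absurd (funext fun i => i.elim0) hb)).summable
  | succ k IH =>
    intro q h0 h1
    have hprod : Summable (fun p : (Fin k → ℕ) × ℕ =>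
        (∏ i : Fin k, q i.castSucc ^ p.1 i) * q (Fin.last k) ^ p.2) := by
      apply Summable.mul_of_nonneg (IH _ (fun i => h0 _) (fun i => h1 _))
        (summable_geometric_of_lt_one (h0 _) (h1 _))
      · intro m; exact Finset.prod_nonneg fun i _ => pow_nonneg (h0 _) _
      · intro a; exact pow_nonneg (h0 _) _
    have heq : (fun p : (Fin k → ℕ) × ℕ => (fun m : Fin (k+1) → ℕ => ∏ i, q i ^ m i)
        (Fin.snoc p.1 p.2)) = fun p : (Fin k → ℕ) × ℕ =>
        (∏ i : Fin k, q i.castSucc ^ p.1 i) * q (Fin.last k) ^ p.2 := by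
      funext p
      show ∏ i : Fin (k+1), q i ^ (Fin.snoc p.1 p.2 : Fin (k+1) → ℕ) i = _
      rw [Fin.prod_univ_castSucc]
      simp [Fin.snoc_castSucc, Fin.snoc_last]
    rw [← Function.Injective.summable_iff snoc_inj (fun m hm => absurd
      (Set.mem_range.mpr ⟨(Fin.init m, m (Fin.last k)), by simp [Fin.snoc_init_self]⟩) hm)]
    show Summable ((fun m : Fin (k+1) → ℕ => ∏ i, q i ^ m i) ∘
      (fun p : (Fin k → ℕ) × ℕ => (Fin.snoc p.1 p.2 : Fin (k+1) → ℕ)))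
    rw [show ((fun m : Fin (k+1) → ℕ => ∏ i, q i ^ m i) ∘
      (fun p : (Fin k → ℕ) × ℕ => (Fin.snoc p.1 p.2 : Fin (k+1) → ℕ))) = _ from heq]
    exact hprod


theorem taylor_multi {α : Type*} (D : α → α) {n : ℕ} (F : (Fin n → α) → (Fin n → ℂ) → ℂ)
    (u : Fin n → α) (ζ zv : Fin n → ℂ)
    (hgap : ∀ i j : Fin n, i ≠ j → ‖zv i - ζ i‖ + ‖zv j - ζ j‖ < ‖ζ i - ζ j‖)
    (hder : ∀ (v : Fin n → α) (i : Fin n) (z : Fin n → ℂ), Conf z →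
      HasDerivAt (fun t => F v (Function.update z i t))
        (F (Function.update v i (D (v i))) z) (z i))
    (hbound : ∀ K : Set (Fin n → ℂ), IsCompact K → (∀ z ∈ K, Conf z) →
      ∃ M : ℝ, ∀ z ∈ K, ‖F u z‖ ≤ M) :
    Summable (fun m : Fin n → ℕ =>
      ‖(∏ j, (((m j).factorial : ℂ))⁻¹ * (zv j - ζ j) ^ (m j)) *
        F (fun j => D^[m j] (u j)) ζ‖) ∧
    HasSum (fun m : Fin n → ℕ =>
      (∏ j, (((m j).factorial : ℂ))⁻¹ * (zv j - ζ j) ^ (m j)) *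
        F (fun j => D^[m j] (u j)) ζ) (F u zv) := by
  classical
  set w : Fin n → ℂ := fun i => zv i - ζ i with hwdef
  obtain ⟨δ, hδ0, hδ⟩ : ∃ δ : ℝ, 0 < δ ∧
      ∀ i j : Fin n, i ≠ j → ‖w i‖ + ‖w j‖ + 5*δ ≤ ‖ζ i - ζ j‖ := by
    by_cases hs : (Finset.univ.offDiag : Finset (Fin n × Fin n)).Nonempty
    · have hpos : 0 < Finset.univ.offDiag.inf' hs
          (fun q => ‖ζ q.1 - ζ q.2‖ - ‖w q.1‖ - ‖w q.2‖) := by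
        rw [Finset.lt_inf'_iff]
        intro q hq
        have hne : q.1 ≠ q.2 := (Finset.mem_offDiag.mp hq).2.2
        have := hgap q.1 q.2 hne
        simp only [hwdef]
        linarith
      refine ⟨(Finset.univ.offDiag.inf' hs
          (fun q => ‖ζ q.1 - ζ q.2‖ - ‖w q.1‖ - ‖w q.2‖))/6, by linarith, ?_⟩
      intro i j hij
      have hmem : (i, j) ∈ Finset.univ.offDiag :=
        Finset.mem_offDiag.mpr ⟨Finset.mem_univ _, Finset.mem_univ _, hij⟩
      have h1 := Finset.inf'_le
        (f := fun q : Fin n × Fin n => ‖ζ q.1 - ζ q.2‖ - ‖w q.1‖ - ‖w q.2‖) hmem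
      linarith
    · refine ⟨1, one_pos, fun i j hij => absurd ?_ hs⟩
      exact ⟨(i, j), Finset.mem_offDiag.mpr ⟨Finset.mem_univ _, Finset.mem_univ _, hij⟩⟩
  set ρ : Fin n → ℝ := fun i => ‖w i‖ + δ with hρdef
  set r : Fin n → ℝ := fun i => ‖w i‖ + 2*δ with hrdef
  have hρ0 : ∀ i, 0 < ρ i := fun i => by
    have := norm_nonneg (w i); simp only [hρdef]; linarith
  have hρr : ∀ i, ρ i < r i := fun i => by simp only [hρdef, hrdef]; linarith
  have hr0 : ∀ i, 0 < r i := fun i => (hρ0 i).trans (hρr i)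
  have hwρ : ∀ i, ‖w i‖ < ρ i := fun i => by simp only [hρdef]; linarith
  -- geometry
  have geo : ∀ z : Fin n → ℂ, (∀ j, ‖z j - ζ j‖ ≤ r j) → Conf z := by
    intro z hz i j hij heq
    have h2 := hδ i j hij
    have h3 := hz i
    have h4 := hz j
    have h1 : ‖ζ i - ζ j‖ ≤ ‖z i - z j‖ + (‖z i - ζ i‖ + ‖z j - ζ j‖) := by
      have he : ζ i - ζ j = (ζ i - z i) + ((z i - z j) + (z j - ζ j)) := by ring
      rw [he]
      refine (norm_add_le _ _).trans ?_
      rw [norm_sub_rev (ζ i) (z i)]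
      have := norm_add_le (z i - z j) (z j - ζ j)
      linarith
    have h5 : ‖z i - z j‖ = 0 := by rw [heq, sub_self, norm_zero]
    simp only [hrdef] at h3 h4
    linarith
  have hρler : ∀ i, ρ i ≤ r i := fun i => (hρr i).le
  set K : Set (Fin n → ℂ) := Set.univ.pi (fun i => Metric.closedBall (ζ i) (ρ i)) with hKdef
  have hKmem : ∀ z : Fin n → ℂ, (∀ j, ‖z j - ζ j‖ ≤ ρ j) → z ∈ K := by
    intro z hz
    rw [hKdef, Set.mem_univ_pi]
    intro i
    rw [Metric.mem_closedBall, dist_eq_norm]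
    exact hz i
  have hKc : IsCompact K := isCompact_univ_pi fun i => isCompact_closedBall _ _
  have hKconf : ∀ z ∈ K, Conf z := by
    intro z hz
    refine geo z fun j => ?_
    have := (Set.mem_univ_pi.mp hz) j
    rw [Metric.mem_closedBall, dist_eq_norm] at this
    exact this.trans (hρler j)
  obtain ⟨M, hM⟩ := hbound K hKc hKconf
  have hζK : ζ ∈ K := hKmem ζ fun j => by simp [le_of_lt (hρ0 j)]
  have hM0 : 0 ≤ M := (norm_nonneg _).trans (hM ζ hζK)
  -- conf after update
  have hupdate_conf : ∀ (z : Fin n → ℂ) (kk : Fin n), (∀ j, ‖z j - ζ j‖ ≤ ρ j) →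
      ∀ t ∈ Metric.ball (ζ kk) (r kk), Conf (Function.update z kk t) := by
    intro z kk hz t ht
    refine geo _ fun j => ?_
    rcases eq_or_ne j kk with rfl | hj
    · rw [Function.update_self]
      rw [Metric.mem_ball, dist_eq_norm] at ht
      exact ht.le
    · rw [Function.update_of_ne hj]
      exact (hz j).trans (hρler j)
  -- differentiability on the ball
  have hdiff : ∀ (v : Fin n → α) (z : Fin n → ℂ) (kk : Fin n),
      (∀ t ∈ Metric.ball (ζ kk) (r kk), Conf (Function.update z kk t)) →
      DifferentiableOn ℂ (fun s => F v (Function.update z kk s)) (Metric.ball (ζ kk) (r kk)) := by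
    intro v z kk hconf t ht
    have h := hder v kk (Function.update z kk t) (hconf t ht)
    simp only [Function.update_idem, Function.update_self] at h
    exact h.differentiableAt.differentiableWithinAt
  -- iterated derivatives
  have hiter : ∀ (m : ℕ) (v : Fin n → α) (z : Fin n → ℂ) (kk : Fin n),
      (∀ t ∈ Metric.ball (ζ kk) (r kk), Conf (Function.update z kk t)) →
      ∀ t ∈ Metric.ball (ζ kk) (r kk),
      iteratedDeriv m (fun s => F v (Function.update z kk s)) t
        = F (Function.update v kk (D^[m] (v kk))) (Function.update z kk t) := by
    intro m
    induction m with
    | zero =>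
      intro v z kk hconf t ht
      simp [iteratedDeriv_zero, Function.update_eq_self]
    | succ m IH =>
      intro v z kk hconf t ht
      rw [iteratedDeriv_succ]
      have hevq : iteratedDeriv m (fun s => F v (Function.update z kk s)) =ᶠ[nhds t]
          (fun s => F (Function.update v kk (D^[m] (v kk))) (Function.update z kk s)) :=
        Filter.eventuallyEq_of_mem (Metric.isOpen_ball.mem_nhds ht)
          (fun s hs => IH v z kk hconf s hs)
      rw [hevq.deriv_eq]
      have h := hder (Function.update v kk (D^[m] (v kk))) kk
        (Function.update z kk t) (hconf t ht)
      simp only [Function.update_idem, Function.update_self] at h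
      rw [h.deriv, Function.iterate_succ_apply']
  -- Cauchy estimates
  have hclaimC : ∀ s : Finset (Fin n), ∀ m : Fin n → ℕ, (∀ j, j ∉ s → m j = 0) →
      ∀ z : Fin n → ℂ, (∀ j, ‖z j - ζ j‖ ≤ ρ j) → (∀ j ∈ s, z j = ζ j) →
      ‖F (fun i => D^[m i] (u i)) z‖
        ≤ M * ∏ j ∈ s, ((m j).factorial : ℝ) / ρ j ^ (m j) := by
    intro s
    induction s using Finset.induction_on with
    | empty =>
      intro m hm z hz _
      have h0 : (fun i => D^[m i] (u i)) = u := funext fun i => by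
        rw [hm i (Finset.notMem_empty i)]; rfl
      rw [h0, Finset.prod_empty, mul_one]
      exact hM z (hKmem z hz)
    | @insert a s ha IH =>
      intro m hm z hz hzs
      set m' := Function.update m a 0 with hm'def
      set vv := fun i => D^[m' i] (u i) with hvvdef
      have hconf : ∀ t ∈ Metric.ball (ζ a) (r a), Conf (Function.update z a t) :=
        hupdate_conf z a hz
      have hdiffg := hdiff vv z a hconf
      have hsphere : ∀ t ∈ Metric.sphere (ζ a) (ρ a),
          ‖(fun s' => F vv (Function.update z a s')) t‖
            ≤ M * ∏ j ∈ s, ((m j).factorial : ℝ) / ρ j ^ (m j) := by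
        intro t ht
        have hm'supp : ∀ j, j ∉ s → m' j = 0 := by
          intro j hj
          rcases eq_or_ne j a with rfl | hne
          · simp [hm'def]
          · rw [hm'def, Function.update_of_ne hne]
            exact hm j (by simp [Finset.mem_insert, hne, hj])
        have hznorm : ∀ j, ‖Function.update z a t j - ζ j‖ ≤ ρ j := by
          intro j
          rcases eq_or_ne j a with rfl | hne
          · rw [Function.update_self]
            rw [Metric.mem_sphere, dist_eq_norm] at ht
            rw [ht]
          · rw [Function.update_of_ne hne]; exact hz j
        have hzeq : ∀ j ∈ s, Function.update z a t j = ζ j := by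
          intro j hj
          have hne : j ≠ a := fun h => ha (h ▸ hj)
          rw [Function.update_of_ne hne]
          exact hzs j (Finset.mem_insert_of_mem hj)
        have h1 := IH m' hm'supp (Function.update z a t) hznorm hzeq
        have h2 : (∏ j ∈ s, ((m' j).factorial : ℝ) / ρ j ^ (m' j))
            = ∏ j ∈ s, ((m j).factorial : ℝ) / ρ j ^ (m j) := by
          refine Finset.prod_congr rfl fun j hj => ?_
          have hne : j ≠ a := fun h => ha (h ▸ hj)
          rw [hm'def, Function.update_of_ne hne]
        rw [h2] at h1
        exact h1
      have hce := cauchyEst (hρ0 a) (hρr a) hdiffg hsphere (m a)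
      have hiter1 := hiter (m a) vv z a hconf (ζ a) (Metric.mem_ball_self (hr0 a))
      have h2 : Function.update vv a (D^[m a] (vv a)) = fun i => D^[m i] (u i) := by
        funext i
        rcases eq_or_ne i a with rfl | hne
        · rw [Function.update_self]
          simp [hvvdef, hm'def]
        · rw [Function.update_of_ne hne, hvvdef]
          simp only [hm'def, Function.update_of_ne hne]
      have h3 : Function.update z a (ζ a) = z := by
        conv_lhs => rw [← hzs a (Finset.mem_insert_self a s)]
        exact Function.update_eq_self a z
      rw [hiter1, h2, h3] at hce
      refine hce.trans_eq ?_
      rw [Finset.prod_insert ha]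
      ring
  -- general term bound
  have htermb : ∀ (m : Fin n → ℕ) (z : Fin n → ℂ), (∀ j, ‖z j - ζ j‖ ≤ ρ j) →
      (∀ j, m j ≠ 0 → z j = ζ j) →
      ‖(∏ j, (((m j).factorial : ℂ))⁻¹ * w j ^ (m j)) * F (fun i => D^[m i] (u i)) z‖
        ≤ M * ∏ j, (‖w j‖ / ρ j) ^ (m j) := by
    intro m z hz hmz
    have h1 := hclaimC (Finset.univ.filter (fun j => m j ≠ 0)) m
      (fun j hj => by simpa using hj) z hz
      (fun j hj => hmz j (Finset.mem_filter.mp hj).2)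
    have h2 : (∏ j ∈ Finset.univ.filter (fun j => m j ≠ 0),
          ((m j).factorial : ℝ) / ρ j ^ (m j))
        = ∏ j, ((m j).factorial : ℝ) / ρ j ^ (m j) := by
      refine Finset.prod_subset (Finset.subset_univ _) fun x _ hx => ?_
      have hx0 : m x = 0 := by simpa using hx
      simp [hx0]
    rw [h2] at h1
    rw [norm_mul, norm_prod]
    have hfac : ∀ j : Fin n, ‖(((m j).factorial : ℂ))⁻¹ * w j ^ (m j)‖
        = (((m j).factorial : ℝ))⁻¹ * ‖w j‖ ^ (m j) := by
      intro j
      rw [norm_mul, norm_inv, norm_pow]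
      norm_num
    rw [Finset.prod_congr rfl (fun j _ => hfac j)]
    have hnn : 0 ≤ ∏ j, (((m j).factorial : ℝ))⁻¹ * ‖w j‖ ^ (m j) :=
      Finset.prod_nonneg fun j _ => by positivity
    calc (∏ j, (((m j).factorial : ℝ))⁻¹ * ‖w j‖ ^ (m j)) * ‖F (fun i => D^[m i] (u i)) z‖
        ≤ (∏ j, (((m j).factorial : ℝ))⁻¹ * ‖w j‖ ^ (m j))
            * (M * ∏ j, ((m j).factorial : ℝ) / ρ j ^ (m j)) :=
          mul_le_mul_of_nonneg_left h1 hnn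
      _ = M * ∏ j, (‖w j‖ / ρ j) ^ (m j) := by
        rw [mul_left_comm]
        congr 1
        rw [← Finset.prod_mul_distrib]
        refine Finset.prod_congr rfl fun j _ => ?_
        have hfj : ((m j).factorial : ℝ) ≠ 0 := Nat.cast_ne_zero.mpr (Nat.factorial_ne_zero _)
        have hρj : ρ j ^ (m j) ≠ 0 := pow_ne_zero _ (hρ0 j).ne'
        rw [div_pow]
        field_simp
  -- summability of norms
  have hq0 : ∀ i, 0 ≤ ‖w i‖ / ρ i := fun i => div_nonneg (norm_nonneg _) (hρ0 i).le
  have hq1 : ∀ i, ‖w i‖ / ρ i < 1 := fun i => (div_lt_one (hρ0 i)).mpr (hwρ i)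
  have hsummable : Summable (fun m : Fin n → ℕ =>
      ‖(∏ j, (((m j).factorial : ℂ))⁻¹ * w j ^ (m j)) * F (fun i => D^[m i] (u i)) ζ‖) :=
    Summable.of_nonneg_of_le (fun m => norm_nonneg _)
      (fun m => htermb m ζ (fun j => by rw [sub_self, norm_zero]; exact (hρ0 j).le)
        (fun j _ => rfl))
      ((summable_pi_pow _ hq0 hq1).mul_left M)
  refine ⟨hsummable, ?_⟩
  -- product over extension
  have hprod_ext : ∀ (β : Type) (inst : CommMonoid β) (k : ℕ) (hk : k ≤ n)
      (g : Fin n → ℕ → β), (∀ j, g j 0 = 1) → ∀ m : Fin k → ℕ,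
      (∏ j, g j (if h : (j:ℕ) < k then m ⟨j.1, h⟩ else 0))
        = ∏ i : Fin k, g (Fin.castLE hk i) (m i) := by
    intro β inst k hk g hg m
    have hsub : (∏ j : Fin n, g j (if h : (j:ℕ) < k then m ⟨j.1, h⟩ else 0))
        = ∏ j ∈ Finset.univ.filter (fun j : Fin n => (j:ℕ) < k),
            g j (if h : (j:ℕ) < k then m ⟨j.1, h⟩ else 0) := by
      refine (Finset.prod_subset (Finset.subset_univ _) fun x _ hx => ?_).symm
      have hnlt : ¬ ((x:ℕ) < k) := by simpa using hx
      rw [dif_neg hnlt, hg]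
    rw [hsub]
    refine Finset.prod_bij'
      (fun j hj => (⟨j.1, (Finset.mem_filter.mp hj).2⟩ : Fin k))
      (fun i _ => Fin.castLE hk i) (fun a ha => Finset.mem_univ _)
      (fun i _ => Finset.mem_filter.mpr ⟨Finset.mem_univ _, i.isLt⟩)
      (fun a ha => by apply Fin.ext; rfl) (fun i hi => by apply Fin.ext; rfl) ?_
    intro a ha
    have hlt : (a:ℕ) < k := (Finset.mem_filter.mp ha).2
    rw [dif_pos hlt]
    congr 1
  -- the main induction on the number of expanded variables
  have hL : ∀ k : ℕ, ∀ hk : k ≤ n,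
      HasSum (fun m : Fin k → ℕ =>
        (∏ j : Fin n, ((((if h : (j:ℕ) < k then m ⟨j.1, h⟩ else 0)).factorial : ℂ))⁻¹
            * w j ^ (if h : (j:ℕ) < k then m ⟨j.1, h⟩ else 0)) *
          F (fun j => D^[if h : (j:ℕ) < k then m ⟨j.1, h⟩ else 0] (u j))
            (fun j => if (j:ℕ) < k then ζ j else zv j)) (F u zv) := by
    intro k
    induction k with
    | zero =>
      intro hk
      have h := hasSum_single (α := ℂ)
        (f := fun m : Fin 0 → ℕ =>
          (∏ j : Fin n, ((((if h : (j:ℕ) < 0 then m ⟨j.1, h⟩ else 0)).factorial : ℂ))⁻¹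
              * w j ^ (if h : (j:ℕ) < 0 then m ⟨j.1, h⟩ else 0)) *
            F (fun j => D^[if h : (j:ℕ) < 0 then m ⟨j.1, h⟩ else 0] (u j))
              (fun j => if (j:ℕ) < 0 then ζ j else zv j))
        (fun i => i.elim0) (fun b hb => absurd (funext fun i => i.elim0) hb)
      simpa using h

    | succ k IH =>
      intro hk
      have hk' : k ≤ n := Nat.le_of_succ_le hk
      set κ : Fin n := ⟨k, hk⟩ with hκdef
      set pt : Fin n → ℂ := fun j => if (j:ℕ) < k then ζ j else zv j with hptdef
      set pt' : Fin n → ℂ := fun j => if (j:ℕ) < k+1 then ζ j else zv j with hpt'def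
      have hptκ : pt κ = zv κ := by simp [hptdef, hκdef]
      have hptdisc : ∀ j, ‖pt j - ζ j‖ ≤ ρ j := by
        intro j
        by_cases hlt : (j:ℕ) < k
        · simp only [hptdef, if_pos hlt, sub_self, norm_zero]
          exact (hρ0 j).le
        · simp only [hptdef, if_neg hlt]
          exact (hwρ j).le
      have hpt'_eq : pt' = Function.update pt κ (ζ κ) := by
        funext j
        rcases eq_or_ne j κ with rfl | hne
        · simp [hpt'def, Function.update_self, hκdef]
        · rw [Function.update_of_ne hne]
          have hjk : (j:ℕ) ≠ k := fun h => hne (Fin.ext (by simp [hκdef, h]))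
          by_cases hlt : (j:ℕ) < k
          · simp only [hptdef, hpt'def, if_pos hlt, if_pos (Nat.lt_succ_of_lt hlt)]
          · simp only [hptdef, hpt'def, if_neg hlt, if_neg (show ¬ ((j:ℕ) < k+1) by omega)]
      have hm0κ : ∀ (mm : Fin k → ℕ), (if h : (κ:ℕ) < k then mm ⟨κ.1, h⟩ else 0) = 0 := by
        intro mm; rw [dif_neg]; simp [hκdef]
      have hext : ∀ (m : Fin k → ℕ) (a : ℕ) (j : Fin n),
          (if h : (j:ℕ) < k+1 then (Fin.snoc m a : Fin (k+1) → ℕ) ⟨j.1, h⟩ else 0)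
            = Function.update (fun j' : Fin n => if h : (j':ℕ) < k then m ⟨j'.1, h⟩ else 0)
                κ a j := by
        intro m a j
        rcases eq_or_ne j κ with rfl | hne
        · rw [Function.update_self, dif_pos (show (κ:ℕ) < k+1 by simp [hκdef])]
          have hlast : (⟨(κ:ℕ), show (κ:ℕ) < k+1 by simp [hκdef]⟩ : Fin (k+1)) = Fin.last k := by
            apply Fin.ext; simp [hκdef]
          rw [hlast, Fin.snoc_last]
        · rw [Function.update_of_ne hne]
          have hjk : (j:ℕ) ≠ k := fun h => hne (Fin.ext (by simp [hκdef, h]))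
          by_cases hlt : (j:ℕ) < k
          · rw [dif_pos hlt, dif_pos (Nat.lt_succ_of_lt hlt)]
            have hcs : (⟨j.1, Nat.lt_succ_of_lt hlt⟩ : Fin (k+1)) = Fin.castSucc ⟨j.1, hlt⟩ := rfl
            rw [hcs, Fin.snoc_castSucc]
          · rw [dif_neg hlt, dif_neg (show ¬ ((j:ℕ) < k+1) by omega)]
      have hpt'disc : ∀ j, ‖pt' j - ζ j‖ ≤ ρ j := by
        intro j
        by_cases hlt : (j:ℕ) < k+1
        · simp only [hpt'def, if_pos hlt, sub_self, norm_zero]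
          exact (hρ0 j).le
        · simp only [hpt'def, if_neg hlt]
          exact (hwρ j).le
      -- the fiberwise expansion in the variable κ
      have hfiber : ∀ m : Fin k → ℕ,
          HasSum (fun a : ℕ =>
            (∏ j : Fin n,
              (((Function.update (fun j' : Fin n =>
                  if h : (j':ℕ) < k then m ⟨j'.1, h⟩ else 0) κ a j).factorial : ℂ))⁻¹
                * w j ^ (Function.update (fun j' : Fin n =>
                  if h : (j':ℕ) < k then m ⟨j'.1, h⟩ else 0) κ a j)) *
              F (fun j => D^[Function.update (fun j' : Fin n =>
                  if h : (j':ℕ) < k then m ⟨j'.1, h⟩ else 0) κ a j] (u j)) pt')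
            ((∏ j : Fin n, ((((if h : (j:ℕ) < k then m ⟨j.1, h⟩ else 0)).factorial : ℂ))⁻¹
                * w j ^ (if h : (j:ℕ) < k then m ⟨j.1, h⟩ else 0)) *
              F (fun j => D^[if h : (j:ℕ) < k then m ⟨j.1, h⟩ else 0] (u j)) pt) := by
        intro m
        set m₀ : Fin n → ℕ := fun j => if h : (j:ℕ) < k then m ⟨j.1, h⟩ else 0 with hm₀def
        set vv : Fin n → α := fun i => D^[m₀ i] (u i) with hvvdef
        have hm₀κ : m₀ κ = 0 := hm0κ m
        have hvvκ : vv κ = u κ := by rw [hvvdef]; simp only [hm₀κ, Function.iterate_zero, id]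
        have hconf : ∀ t ∈ Metric.ball (ζ κ) (r κ), Conf (Function.update pt κ t) :=
          hupdate_conf pt κ hptdisc
        have hzvball : zv κ ∈ Metric.ball (ζ κ) (r κ) := by
          rw [Metric.mem_ball, dist_eq_norm]; exact (hwρ κ).trans (hρr κ)
        have htay := Complex.hasSum_taylorSeries_on_ball (hdiff vv pt κ hconf) hzvball
        have hval : Function.update pt κ (zv κ) = pt := by
          conv_lhs => rw [← hptκ]
          exact Function.update_eq_self κ pt
        have hterm : ∀ a : ℕ,
            iteratedDeriv a (fun s => F vv (Function.update pt κ s)) (ζ κ)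
              = F (Function.update vv κ (D^[a] (u κ))) pt' := by
          intro a
          rw [hiter a vv pt κ hconf (ζ κ) (Metric.mem_ball_self (hr0 κ)), hvvκ, ← hpt'_eq]
        have htuple : ∀ a : ℕ, (fun j => D^[Function.update m₀ κ a j] (u j))
            = Function.update vv κ (D^[a] (u κ)) := by
          intro a; funext j
          rcases eq_or_ne j κ with rfl | hne
          · rw [Function.update_self, Function.update_self]
          · rw [Function.update_of_ne hne, Function.update_of_ne hne]
        have hfactor : ∀ a : ℕ,
            (∏ j : Fin n, (((Function.update m₀ κ a j).factorial : ℂ))⁻¹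
                * w j ^ (Function.update m₀ κ a j))
              = ((a.factorial : ℂ))⁻¹ * w κ ^ a
                * ∏ j ∈ Finset.univ.erase κ, (((m₀ j).factorial : ℂ))⁻¹ * w j ^ (m₀ j) := by
          intro a
          have hfn : (fun j : Fin n => (((Function.update m₀ κ a j).factorial : ℂ))⁻¹
                * w j ^ (Function.update m₀ κ a j))
              = Function.update (fun j => (((m₀ j).factorial : ℂ))⁻¹ * w j ^ (m₀ j)) κ
                  (((a.factorial : ℂ))⁻¹ * w κ ^ a) := by
            funext j
            rcases eq_or_ne j κ with rfl | hne
            · rw [Function.update_self, Function.update_self]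
            · rw [Function.update_of_ne hne, Function.update_of_ne hne]
          rw [hfn, Finset.prod_update_of_mem (Finset.mem_univ κ), Finset.sdiff_singleton_eq_erase]
        have hprodm₀ : (∏ j : Fin n, (((m₀ j).factorial : ℂ))⁻¹ * w j ^ (m₀ j))
            = ∏ j ∈ Finset.univ.erase κ, (((m₀ j).factorial : ℂ))⁻¹ * w j ^ (m₀ j) := by
          rw [← Finset.mul_prod_erase Finset.univ _ (Finset.mem_univ κ)]
          simp [hm₀κ]
        have hC := htay.mul_left
          (∏ j ∈ Finset.univ.erase κ, (((m₀ j).factorial : ℂ))⁻¹ * w j ^ (m₀ j))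
        convert hC using 1
        · rfl
        · funext a
          rw [hfactor a, htuple a, ← hterm a, smul_eq_mul, smul_eq_mul]
          have hwκ : w κ = zv κ - ζ κ := by rw [hwdef]
          rw [hwκ]
          ring
        · rw [hprodm₀]
          congr 1
          show F vv pt = F vv (Function.update pt κ (zv κ))
          rw [hval]
      -- summability of the double series of norms
      have hpairbound : ∀ p : (Fin k → ℕ) × ℕ,
          ‖(∏ j : Fin n, ((((if h : (j:ℕ) < k+1 then (Fin.snoc p.1 p.2 : Fin (k+1) → ℕ) ⟨j.1, h⟩
                else 0)).factorial : ℂ))⁻¹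
              * w j ^ (if h : (j:ℕ) < k+1 then (Fin.snoc p.1 p.2 : Fin (k+1) → ℕ) ⟨j.1, h⟩ else 0)) *
            F (fun j => D^[if h : (j:ℕ) < k+1 then (Fin.snoc p.1 p.2 : Fin (k+1) → ℕ) ⟨j.1, h⟩
                else 0] (u j)) pt'‖
            ≤ M * ((∏ i : Fin k, (‖w (Fin.castLE hk' i)‖ / ρ (Fin.castLE hk' i)) ^ p.1 i)
                * (‖w κ‖ / ρ κ) ^ p.2) := by
        intro p
        simp only [hext p.1 p.2]
        set m₀ : Fin n → ℕ := fun j => if h : (j:ℕ) < k then p.1 ⟨j.1, h⟩ else 0 with hm₀def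
        have hm₀κ : m₀ κ = 0 := hm0κ p.1
        have hmz : ∀ j, Function.update m₀ κ p.2 j ≠ 0 → pt' j = ζ j := by
          intro j hj
          rcases eq_or_ne j κ with rfl | hne
          · simp only [hpt'def]
            rw [if_pos (show (κ:ℕ) < k+1 by simp [hκdef])]
          · rw [Function.update_of_ne hne] at hj
            have hlt : (j:ℕ) < k := by
              by_contra hnlt
              exact hj (by rw [hm₀def]; exact dif_neg hnlt)
            simp only [hpt'def]
            rw [if_pos (Nat.lt_succ_of_lt hlt)]
        refine (htermb (Function.update m₀ κ p.2) pt' hpt'disc hmz).trans ?_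
        have hsplit : (∏ j : Fin n, (‖w j‖ / ρ j) ^ (Function.update m₀ κ p.2 j))
            = (‖w κ‖ / ρ κ) ^ p.2 * ∏ j ∈ Finset.univ.erase κ, (‖w j‖ / ρ j) ^ (m₀ j) := by
          have hfn : (fun j : Fin n => (‖w j‖ / ρ j) ^ (Function.update m₀ κ p.2 j))
              = Function.update (fun j => (‖w j‖ / ρ j) ^ (m₀ j)) κ ((‖w κ‖ / ρ κ) ^ p.2) := by
            funext j
            rcases eq_or_ne j κ with rfl | hne
            · rw [Function.update_self, Function.update_self]
            · rw [Function.update_of_ne hne, Function.update_of_ne hne]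
          rw [hfn, Finset.prod_update_of_mem (Finset.mem_univ κ), Finset.sdiff_singleton_eq_erase]
        have herase : (∏ j ∈ Finset.univ.erase κ, (‖w j‖ / ρ j) ^ (m₀ j))
            = ∏ j : Fin n, (‖w j‖ / ρ j) ^ (m₀ j) := by
          rw [← Finset.mul_prod_erase Finset.univ _ (Finset.mem_univ κ)]
          simp [hm₀κ]
        have hcast : (∏ j : Fin n, (‖w j‖ / ρ j) ^ (m₀ j))
            = ∏ i : Fin k, (‖w (Fin.castLE hk' i)‖ / ρ (Fin.castLE hk' i)) ^ p.1 i := by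
          rw [hm₀def]
          exact hprod_ext ℝ _ k hk' (fun j e => (‖w j‖ / ρ j) ^ e) (fun j => pow_zero _) p.1
        rw [hsplit, herase, hcast]
        rw [mul_comm ((‖w κ‖ / ρ κ) ^ p.2)]
      have hdom2 : Summable (fun p : (Fin k → ℕ) × ℕ =>
          M * ((∏ i : Fin k, (‖w (Fin.castLE hk' i)‖ / ρ (Fin.castLE hk' i)) ^ p.1 i)
            * (‖w κ‖ / ρ κ) ^ p.2)) :=
        (((summable_pi_pow _ (fun i => hq0 _) (fun i => hq1 _)).mul_of_nonneg
          (summable_geometric_of_lt_one (hq0 κ) (hq1 κ))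
          (fun m => Finset.prod_nonneg fun i _ => pow_nonneg (hq0 _) _)
          (fun a => pow_nonneg (hq0 κ) _)).mul_left M)
      have hnormp : Summable (fun p : (Fin k → ℕ) × ℕ =>
          ‖(∏ j : Fin n, ((((if h : (j:ℕ) < k+1 then (Fin.snoc p.1 p.2 : Fin (k+1) → ℕ) ⟨j.1, h⟩
                else 0)).factorial : ℂ))⁻¹
              * w j ^ (if h : (j:ℕ) < k+1 then (Fin.snoc p.1 p.2 : Fin (k+1) → ℕ) ⟨j.1, h⟩ else 0)) *
            F (fun j => D^[if h : (j:ℕ) < k+1 then (Fin.snoc p.1 p.2 : Fin (k+1) → ℕ) ⟨j.1, h⟩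
                else 0] (u j)) pt'‖) :=
        Summable.of_nonneg_of_le (fun p => norm_nonneg _) hpairbound hdom2
      have hjoint := hasSum_of_fiberwise hnormp (fun m => by
        have hfm := hfiber m
        have heq2 : (fun a : ℕ =>
            (∏ j : Fin n, ((((if h : (j:ℕ) < k+1 then (Fin.snoc m a : Fin (k+1) → ℕ) ⟨j.1, h⟩
                  else 0)).factorial : ℂ))⁻¹
                * w j ^ (if h : (j:ℕ) < k+1 then (Fin.snoc m a : Fin (k+1) → ℕ) ⟨j.1, h⟩ else 0)) *
              F (fun j => D^[if h : (j:ℕ) < k+1 then (Fin.snoc m a : Fin (k+1) → ℕ) ⟨j.1, h⟩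
                  else 0] (u j)) pt')
            = fun a : ℕ =>
            (∏ j : Fin n,
              (((Function.update (fun j' : Fin n =>
                  if h : (j':ℕ) < k then m ⟨j'.1, h⟩ else 0) κ a j).factorial : ℂ))⁻¹
                * w j ^ (Function.update (fun j' : Fin n =>
                  if h : (j':ℕ) < k then m ⟨j'.1, h⟩ else 0) κ a j)) *
              F (fun j => D^[Function.update (fun j' : Fin n =>
                  if h : (j':ℕ) < k then m ⟨j'.1, h⟩ else 0) κ a j] (u j)) pt' := by
          funext a
          simp only [hext m a]
        rw [heq2]
        exact hfm) (IH hk')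
      rw [← Function.Injective.hasSum_iff snoc_inj (fun m hm => absurd
        (Set.mem_range.mpr ⟨(Fin.init m, m (Fin.last k)), by simp [Fin.snoc_init_self]⟩) hm)]
      exact hjoint
  -- conclude
  have hfinal := hL n le_rfl
  have hconv : (fun m : Fin n → ℕ =>
      (∏ j : Fin n, ((((if h : (j:ℕ) < n then m ⟨j.1, h⟩ else 0)).factorial : ℂ))⁻¹
          * w j ^ (if h : (j:ℕ) < n then m ⟨j.1, h⟩ else 0)) *
        F (fun j => D^[if h : (j:ℕ) < n then m ⟨j.1, h⟩ else 0] (u j))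
          (fun j => if (j:ℕ) < n then ζ j else zv j))
      = fun m : Fin n → ℕ =>
        (∏ j, (((m j).factorial : ℂ))⁻¹ * w j ^ (m j)) * F (fun j => D^[m j] (u j)) ζ := by
    funext m
    have h1 : ∀ j : Fin n, (if h : (j:ℕ) < n then m ⟨j.1, h⟩ else 0) = m j := fun j => by
      rw [dif_pos j.isLt]
    have h2 : (fun j : Fin n => if (j:ℕ) < n then ζ j else zv j) = ζ :=
      funext fun j => if_pos j.isLt
    simp only [h1, h2]
  rw [hconv] at hfinal
  exact hfinal


section Statement15Aux

variable {V : Type*} [AddCommGroup V] [Module ℂ V]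
variable {W : Type*} [AddCommGroup W] [Module ℂ W]

lemma pair_smul' (G : CGrading W) (φ : W →ₗ[ℂ] ℂ) (c : ℂ) (f : G.Comp) :
    G.pair φ (c • f) = c * G.pair φ f := by
  unfold CGrading.pair
  have h : ∀ n : ℂ, φ ((c • f).1 n) = c • φ (f.1 n) := by
    intro n
    have h1 : (c • f).1 n = c • f.1 n := rfl
    rw [h1, map_smul]
  rw [finsum_congr h, ← smul_finsum c fun n => φ (f.1 n), smul_eq_mul]

lemma pair_zero' (G : CGrading W) (φ : W →ₗ[ℂ] ℂ) : G.pair φ (0 : G.Comp) = 0 := by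
  unfold CGrading.pair
  have h : ∀ n : ℂ, φ ((0 : G.Comp).1 n) = 0 := by
    intro n
    have h1 : (0 : G.Comp).1 n = 0 := rfl
    rw [h1, map_zero]
  rw [finsum_congr h, finsum_zero]

lemma multilinear_zero {M : Type*} [AddCommGroup M] [Module ℂ M] {n : ℕ}
    {Φ : (Fin n → V) → M} (hlin : IsMultilinear Φ) (v : Fin n → V) (i : Fin n)
    (hv : v i = 0) : Φ v = 0 := by
  have h := hlin.2 v i 0 0
  simp only [smul_zero, zero_smul] at h
  rwa [← hv, Function.update_eq_self] at h

lemma multilinear_smul_tuple {M : Type*} [AddCommGroup M] [Module ℂ M] {n : ℕ}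
    {Φ : (Fin n → V) → M} (hlin : IsMultilinear Φ) (c : Fin n → ℂ) (v : Fin n → V) :
    Φ (fun i => c i • v i) = (∏ i, c i) • Φ v := by
  classical
  have key : ∀ s : Finset (Fin n), Φ (fun i => if i ∈ s then c i • v i else v i)
      = (∏ i ∈ s, c i) • Φ v := by
    intro s
    induction s using Finset.induction_on with
    | empty => simp
    | @insert a s ha IH =>
      have hfn : (fun i => if i ∈ insert a s then c i • v i else v i)
          = Function.update (fun i => if i ∈ s then c i • v i else v i) a (c a • v a) := by
        funext i
        rcases eq_or_ne i a with rfl | hne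
        · rw [Function.update_self, if_pos (Finset.mem_insert_self i s)]
        · rw [Function.update_of_ne hne]
          simp [Finset.mem_insert, hne]
      have hbase : (fun i => if i ∈ s then c i • v i else v i) a = v a := by simp [ha]
      have h2 := hlin.2 (fun i => if i ∈ s then c i • v i else v i) a (c a) (v a)
      have h3 : Function.update (fun i => if i ∈ s then c i • v i else v i) a (v a)
          = (fun i => if i ∈ s then c i • v i else v i) := by
        conv_lhs => rw [← hbase]
        exact Function.update_eq_self _ _
      rw [hfn, h2, h3, IH, Finset.prod_insert ha, smul_smul]
  have h := key Finset.univ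
  simpa using h

lemma Yvac_fact (A : MOSVA V) : ∀ (m : ℕ) (u : V),
    ((m.factorial : ℂ)) • A.Y u A.vac (-1 - (m:ℤ)) = A.D^[m] u := by
  intro m
  induction m with
  | zero =>
    intro u
    simpa using A.creation_lim u
  | succ m IH =>
    intro u
    have h := A.D_deriv u A.vac (-1 - (m:ℤ))
    have hD : A.Y (A.D u) A.vac (-1 - (m:ℤ)) = ((m:ℂ) + 1) • A.Y u A.vac (-1 - ((m+1 : ℕ):ℤ)) := by
      rw [show A.D u = A.Y u A.vac (-2) from rfl, h]
      congr 1
      · push_cast; ring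
      · congr 1; push_cast; ring
    rw [Function.iterate_succ_apply, ← IH (A.D u), hD, smul_smul]
    congr 1
    rw [Nat.factorial_succ]
    push_cast
    ring

lemma Yvac_eq (A : MOSVA V) (m : ℕ) (u : V) :
    A.Y u A.vac (-1 - (m:ℤ)) = ((m.factorial : ℂ))⁻¹ • A.D^[m] u := by
  rw [← Yvac_fact A m u, smul_smul, inv_mul_cancel₀
    (Nat.cast_ne_zero.mpr (Nat.factorial_ne_zero m)), one_smul]

end Statement15Aux

/-- Let `V` be a MOSVA, `W` a `V`-bimodule and
`Φ : V^{⊗n} → W̃_{z₁,…,zₙ}` a linear map with the `D`-derivative and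
`d`-conjugation properties. Then for all `u⁽¹⁾,…,u⁽ⁿ⁾ ∈ V` the series
`Φ(Y_V(u⁽¹⁾,z⁽¹⁾−ζ₁)𝟏 ⊗ ⋯ ⊗ Y_V(u⁽ⁿ⁾,z⁽ⁿ⁾−ζₙ)𝟏)(ζ₁,…,ζₙ)` converges absolutely
when `|ζ_i − ζ_j| > |z⁽ⁱ⁾ − ζ_i| + |z⁽ʲ⁾ − ζ_j|` for all `i ≠ j`, to
`Φ(u⁽¹⁾ ⊗ ⋯ ⊗ u⁽ⁿ⁾)(z⁽¹⁾,…,z⁽ⁿ⁾)`. -/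
theorem statement15 {V : Type*} [AddCommGroup V] [Module ℂ V]
    {W : Type*} [AddCommGroup W] [Module ℂ W]
    (A : MOSVA V) (B : Bimod A W) (n : ℕ)
    (Φ : (Fin n → V) → (Fin n → ℂ) → B.gr.Comp)
    (hlin : IsMultilinear Φ) (hWT : ∀ v, B.gr.WTilde (Φ v))
    (hD : DDerivProp A B Φ) (hd : DConjProp A B Φ) :
    ∀ (u : Fin n → V) (ζ zv : Fin n → ℂ),
      (∀ i j : Fin n, i ≠ j → ‖zv i - ζ i‖ + ‖zv j - ζ j‖ < ‖ζ i - ζ j‖) →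
      ∀ φ : W →ₗ[ℂ] ℂ, InGradedDual B.gr.proj φ →
        AbsConvTo (fun K : Fin n → ℤ =>
            B.gr.pair φ (Φ (fun i => A.Y (u i) A.vac (K i)) ζ)
              * ∏ i, (zv i - ζ i) ^ (-(K i) - 1))
          (B.gr.pair φ (Φ u zv)) := by
  intro u ζ zv hgap φ hφ
  classical
  -- the abstract multivariate Taylor theorem applied to F v z = ⟨φ, Φ(v)(z)⟩
  have habs := taylor_multi (α := V) A.D (fun v z => B.gr.pair φ (Φ v z)) u ζ zv hgap
    (fun v i z hz => hD.1 v i φ hφ z hz)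
    (by
      intro K hKc hKconf
      obtain ⟨R, hR⟩ := (hWT u).1 φ hφ
      have hcont : ContinuousOn (fun z : Fin n → ℂ => R.eval z) K := by
        unfold DiagRatFn.eval
        apply ContinuousOn.div
        · exact (MvPolynomial.continuous_eval R.num).continuousOn
        · apply Continuous.continuousOn
          apply continuous_finset_prod
          intro q _
          exact ((continuous_apply q.1).sub (continuous_apply q.2)).pow _
        · intro z hz
          apply Finset.prod_ne_zero_iff.mpr
          intro q hq
          apply pow_ne_zero
          rw [sub_ne_zero]
          exact hKconf z hz q.1 q.2 (Finset.mem_offDiag.mp hq).2.2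
      obtain ⟨M, hM⟩ := hKc.exists_bound_of_continuousOn hcont
      exact ⟨M, fun z hz => by show ‖B.gr.pair φ (Φ u z)‖ ≤ M; rw [hR z (hKconf z hz)]; exact hM z hz⟩)
  -- identification of the terms of the two series
  have hterm_eq : ∀ m : Fin n → ℕ,
      B.gr.pair φ (Φ (fun i => A.Y (u i) A.vac (-1 - (m i : ℤ))) ζ)
        * ∏ i, (zv i - ζ i) ^ (-(-1 - (m i : ℤ)) - 1)
      = (∏ j, (((m j).factorial : ℂ))⁻¹ * (zv j - ζ j) ^ (m j)) *
          B.gr.pair φ (Φ (fun j => A.D^[m j] (u j)) ζ) := by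
    intro m
    have h1 : (fun i => A.Y (u i) A.vac (-1 - (m i : ℤ)))
        = fun i => (((m i).factorial : ℂ))⁻¹ • A.D^[m i] (u i) :=
      funext fun i => Yvac_eq A (m i) (u i)
    rw [h1, multilinear_smul_tuple hlin, Pi.smul_apply, pair_smul']
    have h2 : ∀ i : Fin n, (zv i - ζ i) ^ (-(-1 - (m i : ℤ)) - 1) = (zv i - ζ i) ^ (m i) := by
      intro i
      have h3 : (-(-1 - (m i : ℤ)) - 1) = ((m i : ℕ) : ℤ) := by ring
      rw [h3, zpow_natCast]
    rw [Finset.prod_congr rfl fun i _ => h2 i, Finset.prod_mul_distrib]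
    ring
  -- vanishing of the terms with a nonnegative index
  have hzero : ∀ K : Fin n → ℤ, (∃ i, 0 ≤ K i) →
      B.gr.pair φ (Φ (fun i => A.Y (u i) A.vac (K i)) ζ)
        * ∏ i, (zv i - ζ i) ^ (-(K i) - 1) = 0 := by
    rintro K ⟨i, hi⟩
    have h0 : A.Y (u i) A.vac (K i) = 0 := A.creation (u i) (K i) hi
    have h1 := multilinear_zero hlin (fun i' => A.Y (u i') A.vac (K i')) i h0
    rw [h1, Pi.zero_apply, pair_zero', zero_mul]
  -- reindexing along the injection m ↦ (-1 - m)
  have hinj : Function.Injective (fun (m : Fin n → ℕ) (i : Fin n) => -1 - (m i : ℤ)) := by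
    intro m m' h
    funext i
    have h1 := congrFun h i
    simp only at h1
    omega
  have hrange : ∀ K : Fin n → ℤ,
      K ∉ Set.range (fun (m : Fin n → ℕ) (i : Fin n) => -1 - (m i : ℤ)) → (∃ i, 0 ≤ K i) := by
    intro K hK
    by_contra h
    push_neg at h
    refine hK (Set.mem_range.mpr ⟨fun i => (-1 - K i).toNat, funext fun i => ?_⟩)
    have := h i
    simp only
    omega
  have hcomp : ((fun K : Fin n → ℤ =>
        B.gr.pair φ (Φ (fun i => A.Y (u i) A.vac (K i)) ζ)
          * ∏ i, (zv i - ζ i) ^ (-(K i) - 1))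
      ∘ (fun (m : Fin n → ℕ) (i : Fin n) => -1 - (m i : ℤ)))
      = fun m : Fin n → ℕ =>
        (∏ j, (((m j).factorial : ℂ))⁻¹ * (zv j - ζ j) ^ (m j)) *
          B.gr.pair φ (Φ (fun j => A.D^[m j] (u j)) ζ) := by
    funext m
    exact hterm_eq m
  constructor
  · rw [← Function.Injective.summable_iff hinj
      (fun K hK => by
        show ‖B.gr.pair φ (Φ (fun i => A.Y (u i) A.vac (K i)) ζ)
          * ∏ i, (zv i - ζ i) ^ (-(K i) - 1)‖ = 0
        rw [hzero K (hrange K hK), norm_zero])]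
    have hcompn : ((fun K : Fin n → ℤ =>
          ‖B.gr.pair φ (Φ (fun i => A.Y (u i) A.vac (K i)) ζ)
            * ∏ i, (zv i - ζ i) ^ (-(K i) - 1)‖)
        ∘ (fun (m : Fin n → ℕ) (i : Fin n) => -1 - (m i : ℤ)))
        = fun m : Fin n → ℕ =>
          ‖(∏ j, (((m j).factorial : ℂ))⁻¹ * (zv j - ζ j) ^ (m j)) *
            B.gr.pair φ (Φ (fun j => A.D^[m j] (u j)) ζ)‖ := by
      funext m
      exact congrArg norm (hterm_eq m)
    rw [show ((fun K : Fin n → ℤ =>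
          ‖B.gr.pair φ (Φ (fun i => A.Y (u i) A.vac (K i)) ζ)
            * ∏ i, (zv i - ζ i) ^ (-(K i) - 1)‖)
        ∘ (fun (m : Fin n → ℕ) (i : Fin n) => -1 - (m i : ℤ))) = _ from hcompn]
    exact habs.1
  · rw [← Function.Injective.hasSum_iff hinj (fun K hK => hzero K (hrange K hK))]
    rw [show ((fun K : Fin n → ℤ =>
          B.gr.pair φ (Φ (fun i => A.Y (u i) A.vac (K i)) ζ)
            * ∏ i, (zv i - ζ i) ^ (-(K i) - 1))
        ∘ (fun (m : Fin n → ℕ) (i : Fin n) => -1 - (m i : ℤ))) = _ from hcomp]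
    exact habs.2


end VA
end
end
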